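/- arXiv:1511.06949 — 4 statements merged into one kernel-verified Lean document; each statement's English description precedes it below -/
import Mathlib

section
/- Let 0 ≤ α ≤ 1/2 and let f(z) = z + a_2 z² + a_3 z³ + ⋯ be holomorphic on D with f' nonvanishing, f(z) ≠ 0 for z ≠ 0, and Re(f(z)/(z f'(z))) ≥ α on D ∖ {0} (f almost starlike of order α). Then |a_3| ≤ (1-α)(3-4α). -/
open Complex Metric Set Filter

private lemma derivCongrOn {F G : ℂ → ℂ} {s : Set ℂ} (hs : IsOpen s) (h : Set.EqOn F G s)
    {z : ℂ} (hz : z ∈ s) : deriv F z = deriv G z :=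
  (Filter.eventuallyEq_of_mem (hs.mem_nhds hz) h).deriv_eq

private lemma deriv_id_mul' {g : ℂ → ℂ} {z : ℂ} (hg : DifferentiableAt ℂ g z) :
    deriv (fun w => w * g w) z = g z + z * deriv g z := by
  rw [deriv_fun_mul differentiableAt_fun_id hg, deriv_id'']
  ring

private lemma mulRule {A B C : ℂ → ℂ} {s : Set ℂ} (hs : IsOpen s)
    (hA : AnalyticOnNhd ℂ A s) (hB : AnalyticOnNhd ℂ B s)
    (h : ∀ z ∈ s, A z * B z = C z) :
    ∀ z ∈ s, deriv A z * B z + A z * deriv B z = deriv C z := by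
  intro z hz
  rw [← derivCongrOn hs (fun w hw => h w hw) hz,
    deriv_fun_mul (hA z hz).differentiableAt (hB z hz).differentiableAt]

private lemma analyticOnNhd_dslope_ball {f : ℂ → ℂ}
    (hf : AnalyticOnNhd ℂ f (ball (0:ℂ) 1)) :
    AnalyticOnNhd ℂ (dslope f 0) (ball (0:ℂ) 1) := by
  intro z hz
  rcases eq_or_ne z 0 with rfl | hne
  · rcases hf 0 hz with ⟨q, hq⟩
    exact hq.has_fpower_series_dslope_fslope.analyticAt
  · have h1 : AnalyticAt ℂ (fun w => (f w - f 0) / (w - 0)) z :=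
      ((hf z hz).sub analyticAt_const).div
        (analyticAt_id.sub analyticAt_const) (by simpa using hne)
    apply h1.congr
    filter_upwards [eventually_ne_nhds hne] with w hw
    rw [dslope_of_ne f hw, slope_def_field]

private lemma eq_id_mul_dslope {f : ℂ → ℂ} (h0 : f 0 = 0) :
    f = fun z => z * dslope f 0 z := by
  funext z
  rcases eq_or_ne z 0 with rfl | hz
  · simp [h0]
  · rw [dslope_of_ne f hz, slope_def_field]
    field_simp [h0]
    rw [h0]; ring

private lemma moebius_lt {a b : ℂ} (ha : ‖a‖ < 1) (hb : ‖b‖ < 1) :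
    ‖a - b‖ < ‖1 - (starRingEnd ℂ) b * a‖ := by
  have key : Complex.normSq (1 - (starRingEnd ℂ) b * a) - Complex.normSq (a - b)
      = (1 - Complex.normSq a) * (1 - Complex.normSq b) := by
    simp only [Complex.normSq_apply, Complex.sub_re, Complex.sub_im, Complex.mul_re,
      Complex.mul_im, Complex.one_re, Complex.one_im, Complex.conj_re, Complex.conj_im]
    ring
  have h1 : Complex.normSq a < 1 := by
    rw [← Complex.sq_norm]; nlinarith [norm_nonneg a]
  have h2 : Complex.normSq b < 1 := by
    rw [← Complex.sq_norm]; nlinarith [norm_nonneg b]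
  have h3 : Complex.normSq (a - b) < Complex.normSq (1 - (starRingEnd ℂ) b * a) := by nlinarith
  rw [← Complex.sq_norm, ← Complex.sq_norm] at h3
  nlinarith [norm_nonneg (1 - (starRingEnd ℂ) b * a), norm_nonneg (a - b)]

private lemma schwarz_coeff {ω : ℂ → ℂ} (hω : AnalyticOnNhd ℂ ω (ball (0:ℂ) 1))
    (h0 : ω 0 = 0) (hb : ∀ z ∈ ball (0:ℂ) 1, ‖ω z‖ ≤ 1) :
    ‖deriv ω 0‖ ≤ 1 ∧
      ‖deriv (deriv ω) 0‖ ≤ 2 * (1 - ‖deriv ω 0‖ ^ 2) := by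
  have h0S : (0:ℂ) ∈ ball (0:ℂ) 1 := mem_ball_self one_pos
  have hop : IsOpen (ball (0:ℂ) 1) := isOpen_ball
  have hpre : IsPreconnected (ball (0:ℂ) 1) := (convex_ball (0:ℂ) 1).isPreconnected
  have hstrict : ∀ z ∈ ball (0:ℂ) 1, ‖ω z‖ < 1 := by
    intro z hz
    rcases lt_or_eq_of_le (hb z hz) with h | h
    · exact h
    · exfalso
      have hmax : IsMaxOn (norm ∘ ω) (ball (0:ℂ) 1) z := by
        intro w hw
        simp only [Function.comp_apply, Set.mem_setOf_eq, h]
        exact hb w hw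
      have heq := Complex.eqOn_of_isPreconnected_of_isMaxOn_norm hpre hop
        hω.differentiableOn hz hmax
      have h00 := heq h0S
      simp only [Function.const_apply, h0] at h00
      rw [← h00] at h
      simp at h
  have hmaps : MapsTo ω (ball (0:ℂ) 1) (ball (0:ℂ) 1) := fun z hz => by
    rw [mem_ball_zero_iff]; exact hstrict z hz
  have hd1 : ‖deriv ω 0‖ ≤ 1 :=
    Complex.norm_deriv_le_one_of_mapsTo_ball hω.differentiableOn
      (fun z hz => by rw [h0]; exact ball_subset_closedBall (hmaps hz)) one_pos
  have hGa : AnalyticOnNhd ℂ (dslope ω 0) (ball (0:ℂ) 1) := analyticOnNhd_dslope_ball hω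
  set G := dslope ω 0 with hGdef
  have hG0 : G 0 = deriv ω 0 := dslope_same ω 0
  have hωG : ω = fun z => z * G z := eq_id_mul_dslope h0
  have hGle : ∀ z ∈ ball (0:ℂ) 1, ‖G z‖ ≤ 1 := by
    intro z hz
    rcases eq_or_ne z 0 with rfl | hne
    · rw [hG0]; exact hd1
    · have hzlt : ‖z‖ < 1 := by rwa [mem_ball_zero_iff] at hz
      have h1 : ‖ω z‖ ≤ ‖z‖ :=
        Complex.norm_le_norm_of_mapsTo_ball hω.differentiableOn
          (fun z hz => ball_subset_closedBall (hmaps hz)) h0 hzlt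
      have hz0 : 0 < ‖z‖ := norm_pos_iff.mpr hne
      have hGz : G z = ω z / z := by
        rw [hGdef, dslope_of_ne ω hne, slope_def_field]; simp [h0]
      rw [hGz, norm_div, div_le_one hz0]
      exact h1
  have hdω : ∀ z ∈ ball (0:ℂ) 1, deriv ω z = G z + z * deriv G z := by
    intro z hz
    rw [hωG]
    exact deriv_id_mul' (hGa z hz).differentiableAt
  have hddω : deriv (deriv ω) 0 = 2 * deriv G 0 := by
    rw [derivCongrOn hop (fun z hz => hdω z hz) h0S,
      deriv_fun_add (hGa 0 h0S).differentiableAt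
        (differentiableAt_fun_id.fun_mul (hGa.deriv 0 h0S).differentiableAt),
      deriv_id_mul' (hGa.deriv 0 h0S).differentiableAt]
    ring
  have hkey : ‖deriv G 0‖ ≤ 1 - ‖G 0‖ ^ 2 := by
    by_cases hc : ∀ z ∈ ball (0:ℂ) 1, ‖G z‖ < 1
    · have hG0lt : ‖G 0‖ < 1 := hc 0 h0S
      have hden : ∀ z ∈ ball (0:ℂ) 1, (1:ℂ) - (starRingEnd ℂ) (G 0) * G z ≠ 0 := by
        intro z hz h
        have h1 : ‖(starRingEnd ℂ) (G 0) * G z‖ < 1 := by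
          rw [norm_mul, Complex.norm_conj]
          nlinarith [hc z hz, norm_nonneg (G 0), norm_nonneg (G z)]
        rw [sub_eq_zero] at h
        rw [← h] at h1
        simp at h1
      have hha : AnalyticOnNhd ℂ
          (fun z => (G z - G 0) / (1 - (starRingEnd ℂ) (G 0) * G z)) (ball (0:ℂ) 1) :=
        (hGa.sub analyticOnNhd_const).div
          (analyticOnNhd_const.sub (analyticOnNhd_const.mul hGa)) hden
      set h : ℂ → ℂ := fun z => (G z - G 0) / (1 - (starRingEnd ℂ) (G 0) * G z) with hhdef
      have hh0 : h 0 = 0 := by simp [hhdef]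
      have hhlt : ∀ z ∈ ball (0:ℂ) 1, ‖h z‖ < 1 := by
        intro z hz
        simp only [hhdef]
        rw [norm_div, div_lt_one (norm_pos_iff.mpr (hden z hz))]
        exact moebius_lt (hc z hz) hG0lt
      have hhd : ‖deriv h 0‖ ≤ 1 :=
        Complex.norm_deriv_le_one_of_mapsTo_ball hha.differentiableOn
          (fun z hz => by
            rw [hh0]; exact ball_subset_closedBall (by rw [mem_ball_zero_iff]; exact hhlt z hz))
          one_pos
      have hid : ∀ z ∈ ball (0:ℂ) 1,
          h z * ((1:ℂ) - (starRingEnd ℂ) (G 0) * G z) = G z - G 0 := fun z hz =>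
        div_mul_cancel₀ _ (hden z hz)
      have hBan : AnalyticOnNhd ℂ (fun z => (1:ℂ) - (starRingEnd ℂ) (G 0) * G z)
          (ball (0:ℂ) 1) := analyticOnNhd_const.sub (analyticOnNhd_const.mul hGa)
      have hrule := mulRule hop hha hBan hid 0 h0S
      rw [hh0, zero_mul, add_zero, deriv_sub_const] at hrule
      have e2 : (1:ℂ) - (starRingEnd ℂ) (G 0) * G 0
          = ((1 - ‖G 0‖^2 : ℝ) : ℂ) := by
        rw [mul_comm, Complex.mul_conj, ← Complex.sq_norm]
        push_cast
        ring
      rw [e2] at hrule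
      rw [← hrule, norm_mul, Complex.norm_real, Real.norm_eq_abs,
        _root_.abs_of_nonneg (by nlinarith [norm_nonneg (G 0)] : (0:ℝ) ≤ 1 - ‖G 0‖^2)]
      have hnn : (0:ℝ) ≤ 1 - ‖G 0‖^2 := by nlinarith [norm_nonneg (G 0)]
      nlinarith [mul_le_mul_of_nonneg_right hhd hnn]
    · push_neg at hc
      obtain ⟨z₀, hz₀, hz₁⟩ := hc
      have heq1 : ‖G z₀‖ = 1 := le_antisymm (hGle z₀ hz₀) hz₁
      have hmax : IsMaxOn (norm ∘ G) (ball (0:ℂ) 1) z₀ := by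
        intro w hw
        simp only [Function.comp_apply, Set.mem_setOf_eq, heq1]
        exact hGle w hw
      have heq := Complex.eqOn_of_isPreconnected_of_isMaxOn_norm hpre hop
        hGa.differentiableOn hz₀ hmax
      have hd0 : deriv G 0 = 0 := by
        rw [derivCongrOn hop heq h0S]
        exact deriv_const 0 (G z₀)
      have hG01 : ‖G 0‖ = 1 := by
        have := heq h0S
        simp only [Function.const_apply] at this
        rw [this, heq1]
      rw [hd0, hG01]
      simp
  refine ⟨hd1, ?_⟩
  rw [hddω, ← hG0, norm_mul, Complex.norm_two]
  nlinarith [hkey]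

private lemma core (α : ℝ) (hα0 : 0 ≤ α) (hα1 : α ≤ 1/2)
    (g : ℂ → ℂ) (hg : AnalyticOnNhd ℂ g (ball (0:ℂ) 1)) (hg0 : g 0 = 1)
    (hune : ∀ z ∈ ball (0:ℂ) 1, g z + z * deriv g z ≠ 0)
    (hRe : ∀ z ∈ ball (0:ℂ) 1, α ≤ ((g z / (g z + z * deriv g z))).re) :
    ‖deriv (deriv g) 0‖ ≤ 2 * ((1 - α) * (3 - 4 * α)) := by
  have h0S : (0:ℂ) ∈ ball (0:ℂ) 1 := mem_ball_self one_pos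
  have hop : IsOpen (ball (0:ℂ) 1) := isOpen_ball
  have hua : AnalyticOnNhd ℂ (fun z => g z + z * deriv g z) (ball (0:ℂ) 1) :=
    hg.add (analyticOnNhd_id.mul hg.deriv)
  set u : ℂ → ℂ := fun z => g z + z * deriv g z with hu_def
  have hpa : AnalyticOnNhd ℂ (fun z => g z / u z) (ball (0:ℂ) 1) := hg.div hua hune
  set p : ℂ → ℂ := fun z => g z / u z with hp_def
  have hu0 : u 0 = 1 := by simp [hu_def, hg0]
  have hp0 : p 0 = 1 := by simp [hp_def, hu_def, hg0]
  have hdu : ∀ z ∈ ball (0:ℂ) 1, deriv u z = 2 * deriv g z + z * deriv (deriv g) z := by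
    intro z hz
    rw [hu_def, deriv_fun_add (hg z hz).differentiableAt
        (differentiableAt_fun_id.fun_mul (hg.deriv z hz).differentiableAt),
      deriv_id_mul' (hg.deriv z hz).differentiableAt]
    ring
  have hdu0 : deriv u 0 = 2 * deriv g 0 := by
    have := hdu 0 h0S; simpa using this
  have hddu : deriv (deriv u) 0 = 3 * deriv (deriv g) 0 := by
    rw [derivCongrOn hop (fun z hz => hdu z hz) h0S,
      deriv_fun_add ((hg.deriv 0 h0S).differentiableAt.const_mul 2)
        (differentiableAt_fun_id.fun_mul ((hg.deriv.deriv 0 h0S).differentiableAt)),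
      deriv_const_mul 2 (hg.deriv 0 h0S).differentiableAt,
      deriv_id_mul' ((hg.deriv.deriv 0 h0S).differentiableAt)]
    ring
  have hpu : ∀ z ∈ ball (0:ℂ) 1, p z * u z = g z := fun z hz =>
    div_mul_cancel₀ _ (hune z hz)
  have I1 := mulRule hop hpa hua hpu
  have hP0 : deriv p 0 = -(deriv g 0) := by
    have h := I1 0 h0S
    rw [hu0, hp0, hdu0] at h
    linear_combination h
  have I2 : deriv (fun z => deriv p z * u z + p z * deriv u z) 0 = deriv (deriv g) 0 :=
    derivCongrOn hop (fun z hz => I1 z hz) h0S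
  have hQ : deriv (deriv p) 0 = -2 * deriv (deriv g) 0 + 4 * deriv g 0 ^ 2 := by
    rw [deriv_fun_add ((hpa.deriv 0 h0S).differentiableAt.fun_mul (hua 0 h0S).differentiableAt)
        ((hpa 0 h0S).differentiableAt.fun_mul ((hua.deriv 0 h0S).differentiableAt)),
      deriv_fun_mul (hpa.deriv 0 h0S).differentiableAt (hua 0 h0S).differentiableAt,
      deriv_fun_mul (hpa 0 h0S).differentiableAt (hua.deriv 0 h0S).differentiableAt,
      hu0, hp0, hdu0, hddu, hP0] at I2
    linear_combination I2
  -- the ω function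
  set κ : ℂ := ((1 - 2*α : ℝ) : ℂ) with hκdef
  have hDne : ∀ z ∈ ball (0:ℂ) 1, p z + κ ≠ 0 := by
    intro z hz h
    have h1 : α ≤ (p z).re := hRe z hz
    have h2 : (p z + κ).re = (p z).re + (1 - 2*α) := by
      simp [hκdef]
    rw [h] at h2
    simp only [Complex.zero_re] at h2
    linarith
  have hωa : AnalyticOnNhd ℂ (fun z => (p z - 1) / (p z + κ)) (ball (0:ℂ) 1) :=
    (hpa.sub analyticOnNhd_const).div (hpa.add analyticOnNhd_const) hDne
  set ω : ℂ → ℂ := fun z => (p z - 1) / (p z + κ) with hωdef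
  have hω0 : ω 0 = 0 := by simp [hωdef, hp0]
  have hωle : ∀ z ∈ ball (0:ℂ) 1, ‖ω z‖ ≤ 1 := by
    intro z hz
    simp only [hωdef]
    rw [norm_div, div_le_one (norm_pos_iff.mpr (hDne z hz))]
    have h1 : α ≤ (p z).re := hRe z hz
    rw [Complex.norm_def, Complex.norm_def]
    apply Real.sqrt_le_sqrt
    simp only [Complex.normSq_apply, Complex.sub_re, Complex.sub_im, Complex.add_re,
      Complex.add_im, Complex.one_re, Complex.one_im, hκdef, Complex.ofReal_re,
      Complex.ofReal_im]
    nlinarith [h1, hα1, mul_nonneg (by linarith : (0:ℝ) ≤ (p z).re - α)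
      (by linarith : (0:ℝ) ≤ 1 - α)]
  obtain ⟨hW1, hW2⟩ := schwarz_coeff hωa hω0 hωle
  have hωpu : ∀ z ∈ ball (0:ℂ) 1, ω z * (p z + κ) = p z - 1 := fun z hz =>
    div_mul_cancel₀ _ (hDne z hz)
  have hpκa : AnalyticOnNhd ℂ (fun z => p z + κ) (ball (0:ℂ) 1) :=
    hpa.add analyticOnNhd_const
  have J1 := mulRule hop hωa hpκa hωpu
  have J1' : ∀ z ∈ ball (0:ℂ) 1,
      deriv ω z * (p z + κ) + ω z * deriv p z = deriv p z := by
    intro z hz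
    have h := J1 z hz
    rwa [deriv_add_const, deriv_sub_const] at h
  have hW1e : deriv ω 0 * ((2 - 2*α : ℝ) : ℂ) = deriv p 0 := by
    have h := J1' 0 h0S
    rw [hω0, hp0] at h
    rw [hκdef] at h
    push_cast at h ⊢
    linear_combination h
  have J2 : deriv (fun z => deriv ω z * (p z + κ) + ω z * deriv p z) 0 = deriv (deriv p) 0 :=
    derivCongrOn hop (fun z hz => J1' z hz) h0S
  have hW2e : deriv (deriv ω) 0 * ((2 - 2*α : ℝ):ℂ) + 2 * deriv ω 0 * deriv p 0
      = deriv (deriv p) 0 := by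
    rw [deriv_fun_add ((hωa.deriv 0 h0S).differentiableAt.fun_mul
        ((hpa 0 h0S).differentiableAt.add_const κ))
        ((hωa 0 h0S).differentiableAt.fun_mul (hpa.deriv 0 h0S).differentiableAt),
      deriv_fun_mul (hωa.deriv 0 h0S).differentiableAt ((hpa 0 h0S).differentiableAt.add_const κ),
      deriv_fun_mul (hωa 0 h0S).differentiableAt (hpa.deriv 0 h0S).differentiableAt,
      deriv_add_const, hω0, hp0, hκdef] at J2
    push_cast at J2 ⊢
    linear_combination J2
  -- assemble
  rw [← hW1e] at hW2e hP0
  have hC : deriv (deriv g) 0 = 2 * (deriv ω 0 * ((2 - 2*α : ℝ) : ℂ))^2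
      - (deriv (deriv ω) 0 * ((2 - 2*α : ℝ):ℂ)
        + 2 * deriv ω 0 * (deriv ω 0 * ((2 - 2*α : ℝ) : ℂ))) / 2 := by
    linear_combination (1/2 : ℂ) * hQ + (1/2 : ℂ) * hW2e
      + (-2 * (deriv ω 0 * ((2 - 2*α : ℝ) : ℂ) - deriv g 0)) * hP0
  have e1 : 2 * (deriv ω 0 * ((2 - 2*α : ℝ) : ℂ))^2
      - (deriv (deriv ω) 0 * ((2 - 2*α : ℝ):ℂ)
        + 2 * deriv ω 0 * (deriv ω 0 * ((2 - 2*α : ℝ) : ℂ))) / 2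
      = ((2*(2 - 2*α)^2 - (2 - 2*α) : ℝ) : ℂ) * (deriv ω 0)^2
        - (((2 - 2*α)/2 : ℝ) : ℂ) * deriv (deriv ω) 0 := by
    push_cast
    ring
  rw [hC, e1]
  have hB1 : (1:ℝ) ≤ 2 - 2*α := by linarith
  calc ‖((2*(2 - 2*α)^2 - (2 - 2*α) : ℝ) : ℂ) * (deriv ω 0)^2
        - (((2 - 2*α)/2 : ℝ) : ℂ) * deriv (deriv ω) 0‖
      ≤ ‖((2*(2 - 2*α)^2 - (2 - 2*α) : ℝ) : ℂ) * (deriv ω 0)^2‖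
        + ‖(((2 - 2*α)/2 : ℝ) : ℂ) * deriv (deriv ω) 0‖ := by
        exact norm_sub_le _ _
    _ = (2*(2 - 2*α)^2 - (2 - 2*α)) * ‖deriv ω 0‖^2
        + (2 - 2*α)/2 * ‖deriv (deriv ω) 0‖ := by
        rw [norm_mul, norm_mul, Complex.norm_real, Complex.norm_real, Real.norm_eq_abs, Real.norm_eq_abs, norm_pow,
          _root_.abs_of_nonneg (by nlinarith : (0:ℝ) ≤ 2*(2 - 2*α)^2 - (2 - 2*α)),
          _root_.abs_of_nonneg (by linarith : (0:ℝ) ≤ (2 - 2*α)/2)]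
    _ ≤ 2 * ((1 - α) * (3 - 4 * α)) := by
        nlinarith [hW1, hW2, norm_nonneg (deriv ω 0),
          norm_nonneg (deriv (deriv ω) 0), sq_nonneg (‖deriv ω 0‖),
          mul_le_mul_of_nonneg_left hW2 (by linarith : (0:ℝ) ≤ (2 - 2*α)/2),
          mul_nonneg (by nlinarith : (0:ℝ) ≤ 2*(2 - 2*α)^2 - 2*(2 - 2*α))
            (by nlinarith [norm_nonneg (deriv ω 0)] :
              (0:ℝ) ≤ 1 - ‖deriv ω 0‖^2)]

theorem stmt_16 (α : ℝ) (hα0 : 0 ≤ α) (hα1 : α ≤ 1/2)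
    (f : ℂ → ℂ) (hf : DifferentiableOn ℂ f (ball (0:ℂ) 1))
    (h0 : f 0 = 0) (h1 : deriv f 0 = 1)
    (hf' : ∀ z ∈ ball (0:ℂ) 1, deriv f z ≠ 0)
    (hfz : ∀ z ∈ ball (0:ℂ) 1, z ≠ 0 → f z ≠ 0)
    (a : ℕ → ℂ) (ha : ∀ n, a n = iteratedDeriv n f 0 / (Nat.factorial n))
    (hstar : ∀ z ∈ ball (0:ℂ) 1, z ≠ 0 → α ≤ (f z / (z * deriv f z)).re) :
    ‖a 3‖ ≤ (1 - α) * (3 - 4 * α) := by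
  have h0S : (0:ℂ) ∈ ball (0:ℂ) 1 := mem_ball_self one_pos
  have hop : IsOpen (ball (0:ℂ) 1) := isOpen_ball
  have hfa : AnalyticOnNhd ℂ f (ball (0:ℂ) 1) := hf.analyticOnNhd isOpen_ball
  obtain ⟨g, hfg, hga⟩ : ∃ g, f = (fun z => z * g z) ∧ AnalyticOnNhd ℂ g (ball (0:ℂ) 1) :=
    ⟨dslope f 0, eq_id_mul_dslope h0, analyticOnNhd_dslope_ball hfa⟩
  have hdf : ∀ z ∈ ball (0:ℂ) 1, deriv f z = g z + z * deriv g z := by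
    intro z hz
    rw [hfg]
    exact deriv_id_mul' (hga z hz).differentiableAt
  have hg0 : g 0 = 1 := by
    have h := hdf 0 h0S
    rw [h1] at h
    simpa using h.symm
  have hune : ∀ z ∈ ball (0:ℂ) 1, g z + z * deriv g z ≠ 0 := by
    intro z hz
    rw [← hdf z hz]
    exact hf' z hz
  have hRe : ∀ z ∈ ball (0:ℂ) 1, α ≤ ((g z / (g z + z * deriv g z))).re := by
    intro z hz
    rcases eq_or_ne z 0 with rfl | hne
    · simp only [hg0, zero_mul, add_zero, div_one, Complex.one_re]
      linarith
    · have h2 : g z / (g z + z * deriv g z) = f z / (z * deriv f z) := by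
        rw [← hdf z hz, hfg]
        simp only
        rw [mul_div_mul_left _ _ hne]
      rw [h2]
      exact hstar z hz hne
  have hdf2 : ∀ z ∈ ball (0:ℂ) 1, deriv (deriv f) z
      = 2 * deriv g z + z * deriv (deriv g) z := by
    intro z hz
    rw [derivCongrOn hop (fun w hw => hdf w hw) hz,
      deriv_fun_add (hga z hz).differentiableAt
        (differentiableAt_fun_id.fun_mul (hga.deriv z hz).differentiableAt),
      deriv_id_mul' (hga.deriv z hz).differentiableAt]
    ring
  have hdf3 : deriv (deriv (deriv f)) 0 = 3 * deriv (deriv g) 0 := by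
    rw [derivCongrOn hop (fun w hw => hdf2 w hw) h0S,
      deriv_fun_add ((hga.deriv 0 h0S).differentiableAt.const_mul 2)
        (differentiableAt_fun_id.fun_mul ((hga.deriv.deriv 0 h0S).differentiableAt)),
      deriv_const_mul 2 (hga.deriv 0 h0S).differentiableAt,
      deriv_id_mul' ((hga.deriv.deriv 0 h0S).differentiableAt)]
    ring
  have key := core α hα0 hα1 g hga hg0 hune hRe
  have ha3 : a 3 = deriv (deriv g) 0 / 2 := by
    rw [ha 3]
    have h3 : iteratedDeriv 3 f 0 = deriv (deriv (deriv f)) 0 := by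
      simp [iteratedDeriv_succ, iteratedDeriv_zero]
    rw [h3, hdf3]
    norm_num [Nat.factorial]
    ring
  rw [ha3, norm_div, Complex.norm_two]
  linarith [key]
end

section
/- Let 0 ≤ α ≤ (37-√505)/72 and let f(z) = z + a_2 z² + a_3 z³ + a_4 z⁴ + ⋯ be holomorphic on D with f' nonvanishing, f(z) ≠ 0 for z ≠ 0, and Re(f(z)/(z f'(z))) ≥ α on D ∖ {0}. Then |a_4| ≤ (1-α)(3-4α)(4-6α)/3. -/
open Complex Metric

namespace St17

/-- `F` is given on the ball of radius `r` about `0` by the power series with coefficients `c`. -/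
def HC (F : ℂ → ℂ) (c : ℕ → ℂ) (r : ℝ) : Prop :=
  ∀ z : ℂ, ‖z‖ < r → HasSum (fun n => c n * z ^ n) (F z)

theorem HC.congr {F G : ℂ → ℂ} {c : ℕ → ℂ} {r : ℝ} (h : HC F c r)
    (he : ∀ z : ℂ, ‖z‖ < r → F z = G z) : HC G c r := by
  intro z hz
  rw [← he z hz]; exact h z hz

theorem HC.summable_abs {F : ℂ → ℂ} {c : ℕ → ℂ} {r : ℝ} (h : HC F c r)
    {ρ : ℝ} (h0 : 0 ≤ ρ) (hρ : ρ < r) :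
    Summable fun n => ‖c n‖ * ρ ^ n := by
  have hr0 : 0 < r := lt_of_le_of_lt h0 hρ
  obtain ⟨ρ', hρ'pos, hρlt, hρ'lt⟩ : ∃ ρ' : ℝ, 0 < ρ' ∧ ρ < ρ' ∧ ρ' < r :=
    ⟨(ρ + r) / 2, by linarith, by linarith, by linarith⟩
  have habs : ‖(ρ' : ℂ)‖ < r := by
    rwa [Complex.norm_real, Real.norm_eq_abs, abs_of_pos hρ'pos]
  have hsum := (h (ρ' : ℂ) habs).summable
  have htend : Filter.Tendsto (fun n => ‖c n * (ρ' : ℂ) ^ n‖) Filter.atTop (nhds 0) := by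
    simpa using hsum.tendsto_atTop_zero.norm
  have hev : ∀ᶠ n in Filter.atTop, ‖c n * (ρ' : ℂ) ^ n‖ < 1 :=
    htend.eventually_lt_const one_pos
  have hq0 : (0:ℝ) ≤ ρ / ρ' := by positivity
  have hq1 : ρ / ρ' < 1 := (div_lt_one hρ'pos).2 hρlt
  refine summable_of_isBigO_nat (summable_geometric_of_lt_one hq0 hq1) ?_
  rw [Asymptotics.isBigO_iff]
  refine ⟨1, ?_⟩
  filter_upwards [hev] with n hn
  have hρ'n : ρ' ^ n ≠ 0 := by positivity
  have h1 : ‖c n‖ * ρ ^ n = ‖c n‖ * ρ' ^ n * (ρ / ρ') ^ n := by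
    rw [div_pow]
    field_simp
  have h2 : ‖c n * (ρ' : ℂ) ^ n‖ = ‖c n‖ * ρ' ^ n := by
    simp [Complex.norm_real, Real.norm_eq_abs, abs_of_pos hρ'pos, map_mul, map_pow]
  rw [h2] at hn
  have h3 : (0:ℝ) ≤ (ρ/ρ') ^ n := by positivity
  have hnn : (0:ℝ) ≤ ‖c n‖ * ρ ^ n := by positivity
  rw [Real.norm_eq_abs, Real.norm_eq_abs, one_mul, _root_.abs_of_nonneg hnn, _root_.abs_of_nonneg h3, h1]
  exact mul_le_of_le_one_left h3 hn.le

theorem coeff_ofScalars {c : ℕ → ℂ} {n : ℕ} :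
    (FormalMultilinearSeries.ofScalars ℂ c).coeff n = c n := by
  show (FormalMultilinearSeries.ofScalars ℂ c n) (fun _ => (1:ℂ)) = c n
  rw [FormalMultilinearSeries.ofScalars_apply_eq]
  simp

theorem HC.hasFPowerSeriesOnBall {F : ℂ → ℂ} {c : ℕ → ℂ} {r : ℝ} (h : HC F c r) (hr : 0 < r) :
    HasFPowerSeriesOnBall F (FormalMultilinearSeries.ofScalars ℂ c) 0 (ENNReal.ofReal r) := by
  constructor
  · -- radius bound
    refine ENNReal.le_of_forall_nnreal_lt fun q hq => ?_
    have hq' : (q : ℝ) < r := by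
      rw [← ENNReal.ofReal_coe_nnreal] at hq
      exact (ENNReal.ofReal_lt_ofReal_iff hr).1 hq
    refine FormalMultilinearSeries.le_radius_of_summable _ ?_
    have := h.summable_abs q.coe_nonneg hq'
    refine this.congr fun n => ?_
    rw [FormalMultilinearSeries.ofScalars_norm]
  · exact ENNReal.ofReal_pos.2 hr
  · intro y hy
    have hy' : ‖y‖ < r := by
      rw [EMetric.mem_ball, edist_lt_ofReal, dist_zero_right] at hy
      exact hy
    have := h y hy'
    rw [zero_add]
    simp only [FormalMultilinearSeries.ofScalars_apply_eq, smul_eq_mul]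
    exact this

theorem HC.unique {F : ℂ → ℂ} {c d : ℕ → ℂ} {r r' : ℝ} (h1 : HC F c r) (h2 : HC F d r')
    (hr : 0 < r) (hr' : 0 < r') : c = d := by
  have p1 := (h1.hasFPowerSeriesOnBall hr).hasFPowerSeriesAt
  have p2 := (h2.hasFPowerSeriesOnBall hr').hasFPowerSeriesAt
  have := p1.eq_formalMultilinearSeries p2
  exact FormalMultilinearSeries.ofScalars_series_injective (𝕜 := ℂ) ℂ this

theorem HC.mul {F G : ℂ → ℂ} {c d : ℕ → ℂ} {r : ℝ} (hF : HC F c r) (hG : HC G d r) :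
    HC (fun z => F z * G z) (fun n => ∑ k ∈ Finset.range (n + 1), c k * d (n - k)) r := by
  intro z hz
  have hz0 : (0:ℝ) ≤ ‖z‖ := norm_nonneg z
  have s1 : Summable fun n => ‖c n * z ^ n‖ := by
    have := hF.summable_abs hz0 hz
    simpa [map_mul, map_pow] using this
  have s2 : Summable fun n => ‖d n * z ^ n‖ := by
    have := hG.summable_abs hz0 hz
    simpa [map_mul, map_pow] using this
  have key := hasSum_sum_range_mul_of_summable_norm s1 s2
  rw [(hF z hz).tsum_eq, (hG z hz).tsum_eq] at key
  convert key using 2 with n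
  · rfl
  rw [Finset.sum_mul]
  refine Finset.sum_congr rfl fun k hk => ?_
  have hkn : k ≤ n := Nat.lt_succ_iff.1 (Finset.mem_range.1 hk)
  have : z ^ n = z ^ k * z ^ (n - k) := by
    rw [← pow_add, Nat.add_sub_cancel' hkn]
  rw [this]; ring

theorem hc_taylor {F : ℂ → ℂ} (hF : DifferentiableOn ℂ F (ball (0:ℂ) 1)) :
    HC F (fun n => iteratedDeriv n F 0 / (Nat.factorial n)) 1 := by
  intro z hz
  have hz' : z ∈ ball (0:ℂ) 1 := by rwa [mem_ball_zero_iff]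
  have h := Complex.hasSum_taylorSeries_on_ball hF hz'
  convert h using 2 with n
  · rfl
  have hfac : ((Nat.factorial n : ℂ)) ≠ 0 := Nat.cast_ne_zero.2 n.factorial_ne_zero
  rw [sub_zero, smul_eq_mul, smul_eq_mul]
  field_simp

theorem hc_const (k : ℂ) (r : ℝ) : HC (fun _ => k) (fun n => if n = 0 then k else 0) r := by
  intro z hz
  have h := hasSum_single (f := fun n => (if n = 0 then k else 0) * z ^ n) 0
    (by intro b hb; simp [hb])
  simpa using h

theorem hc_id (r : ℝ) : HC (fun z => z) (fun n => if n = 1 then 1 else 0) r := by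
  intro z hz
  have h := hasSum_single (f := fun n => (if n = 1 then (1:ℂ) else 0) * z ^ n) 1
    (by intro b hb; simp [hb])
  simpa using h

theorem HC.add {F G : ℂ → ℂ} {c d : ℕ → ℂ} {r : ℝ} (h1 : HC F c r) (h2 : HC G d r) :
    HC (fun z => F z + G z) (fun n => c n + d n) r := fun z hz => by
  simpa [add_mul] using (h1 z hz).add (h2 z hz)

theorem HC.sub {F G : ℂ → ℂ} {c d : ℕ → ℂ} {r : ℝ} (h1 : HC F c r) (h2 : HC G d r) :
    HC (fun z => F z - G z) (fun n => c n - d n) r := fun z hz => by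
  simpa [sub_mul] using (h1 z hz).sub (h2 z hz)

/-- Schwarz lemma, dslope version, for maps into the closed unit disk. -/
theorem bound_dslope {h : ℂ → ℂ} (hd : DifferentiableOn ℂ h (ball (0:ℂ) 1))
    (hb : ∀ z ∈ ball (0:ℂ) 1, ‖h z‖ ≤ 1) (h0 : h 0 = 0) :
    ∀ z ∈ ball (0:ℂ) 1, ‖dslope h 0 z‖ ≤ 1 := by
  intro z hz
  have key : ∀ ε : ℝ, 0 < ε → ‖dslope h 0 z‖ ≤ 1 + ε := by
    intro ε hε
    have hmaps : Set.MapsTo h (ball (0:ℂ) 1) (ball (h 0) (1 + ε)) := by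
      intro x hx
      rw [mem_ball, h0, dist_zero_right]
      exact lt_of_le_of_lt (hb x hx) (by linarith)
    have := Complex.norm_dslope_le_div_of_mapsTo_ball hd (hmaps.mono_right ball_subset_closedBall) hz
    rwa [div_one] at this
  refine le_of_forall_pos_le_add fun ε hε => key ε hε

theorem mobius_le_one {a b : ℂ} (ha : ‖a‖ ≤ 1) (hb : ‖b‖ ≤ 1) :
    ‖b - a‖ ≤ ‖1 - (starRingEnd ℂ) a * b‖ := by
  have hna : Complex.normSq a ≤ 1 := by
    rw [← Complex.sq_norm]; nlinarith [norm_nonneg a]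
  have hnb : Complex.normSq b ≤ 1 := by
    rw [← Complex.sq_norm]; nlinarith [norm_nonneg b]
  rw [Complex.norm_def, Complex.norm_def]
  apply Real.sqrt_le_sqrt
  simp only [Complex.normSq_apply, Complex.sub_re, Complex.sub_im, Complex.one_re, Complex.one_im,
    Complex.mul_re, Complex.mul_im, Complex.conj_re, Complex.conj_im] at *
  nlinarith [mul_nonneg (sub_nonneg.2 hna) (sub_nonneg.2 hnb)]

/-- Schwarz-Pick at the origin for maps into the closed unit disk. -/
theorem schwarz_pick_zero {h : ℂ → ℂ} (hd : DifferentiableOn ℂ h (ball (0:ℂ) 1))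
    (hb : ∀ z ∈ ball (0:ℂ) 1, ‖h z‖ ≤ 1) :
    ‖deriv h 0‖ ≤ 1 - ‖h 0‖ ^ 2 := by
  have h0mem : (0:ℂ) ∈ ball (0:ℂ) 1 := mem_ball_self one_pos
  by_cases hc : ‖h 0‖ = 1
  · have hmax : IsMaxOn (norm ∘ h) (ball (0:ℂ) 1) 0 := by
      intro x hx
      simp only [Function.comp_apply]
      rw [hc] at *
      exact le_trans (hb x hx) (by rw [← hc])
    have heq := Complex.eqOn_of_isPreconnected_of_isMaxOn_norm
      (convex_ball (0:ℂ) 1).isPreconnected isOpen_ball hd h0mem hmax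
    have hev : h =ᶠ[nhds (0:ℂ)] (fun _ => h 0) := by
      filter_upwards [isOpen_ball.mem_nhds h0mem] with x hx
      exact heq hx
    have : deriv h 0 = 0 := by rw [hev.deriv_eq, deriv_const]
    rw [this, norm_zero, hc]
    norm_num
  · have hlt : ‖h 0‖ < 1 := lt_of_le_of_ne (hb 0 h0mem) hc
    set A := h 0 with hA
    have hden : ∀ z ∈ ball (0:ℂ) 1, 1 - (starRingEnd ℂ) A * h z ≠ 0 := by
      intro z hz
      have habs : ‖(starRingEnd ℂ) A * h z‖ < 1 := by
        rw [norm_mul, Complex.norm_conj]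
        calc ‖A‖ * ‖h z‖ ≤ ‖A‖ * 1 :=
              mul_le_mul_of_nonneg_left (hb z hz) (norm_nonneg A)
          _ = ‖A‖ := mul_one _
          _ < 1 := hlt
      intro hcontra
      rw [sub_eq_zero] at hcontra
      rw [← hcontra] at habs
      simp at habs
    set H : ℂ → ℂ := fun z => (h z - A) / (1 - (starRingEnd ℂ) A * h z) with hH
    have hHd : DifferentiableOn ℂ H (ball (0:ℂ) 1) := by
      apply DifferentiableOn.div
      · exact hd.sub_const A
      · exact (differentiableOn_const 1).sub ((differentiableOn_const _).mul hd)
      · exact hden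
    have hHb : ∀ z ∈ ball (0:ℂ) 1, ‖H z‖ ≤ 1 := by
      intro z hz
      rw [hH]
      simp only [norm_div]
      exact div_le_one_of_le₀ (mobius_le_one hlt.le (hb z hz)) (norm_nonneg _)
    have hH0 : H 0 = 0 := by rw [hH]; simp [← hA]
    have hb1 : ‖dslope H 0 0‖ ≤ 1 := bound_dslope hHd hHb hH0 0 h0mem
    rw [dslope_same] at hb1
    have hns : Complex.normSq A < 1 := by rw [← Complex.sq_norm]; nlinarith [norm_nonneg A]
    have hne : (1 : ℂ) - (Complex.normSq A : ℂ) ≠ 0 := by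
      have h' : ((1 - Complex.normSq A : ℝ) : ℂ) ≠ 0 := Complex.ofReal_ne_zero.2 (by linarith)
      simpa using h'
    have hdiff : DifferentiableAt ℂ h 0 := hd.differentiableAt (isOpen_ball.mem_nhds h0mem)
    have hh : HasDerivAt h (deriv h 0) 0 := hdiff.hasDerivAt
    have hnum : HasDerivAt (fun z => h z - A) (deriv h 0) 0 := hh.sub_const A
    have hden' : HasDerivAt (fun z => 1 - (starRingEnd ℂ) A * h z)
        (-((starRingEnd ℂ) A * deriv h 0)) 0 := by
      have := (hh.const_mul ((starRingEnd ℂ) A)).const_sub 1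
      simpa using this
    have hdiv := hnum.div hden' (hden 0 h0mem)
    have hconjA : (starRingEnd ℂ) A * A = (Complex.normSq A : ℂ) := by
      rw [mul_comm, Complex.mul_conj]
    have hderivH : deriv H 0 = deriv h 0 / (1 - (Complex.normSq A : ℂ)) := by
      rw [hH]
      rw [show (fun z => (h z - A) / (1 - (starRingEnd ℂ) A * h z)) = ((fun z => h z - A) / fun z => 1 - (starRingEnd ℂ) A * h z) from rfl]
      rw [hdiv.deriv]
      rw [← hA, hconjA]
      field_simp
      ring
    rw [hderivH, norm_div] at hb1
    have habs1 : ‖(1:ℂ) - (Complex.normSq A : ℂ)‖ = 1 - Complex.normSq A := by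
      rw [show (1:ℂ) - (Complex.normSq A:ℂ) = ((1 - Complex.normSq A : ℝ) : ℂ) by push_cast; ring,
        Complex.norm_real, Real.norm_eq_abs, _root_.abs_of_pos (by linarith)]
    rw [habs1, div_le_one (by linarith)] at hb1
    rw [Complex.sq_norm]
    exact hb1
/-- Taylor coefficient at 0. -/
noncomputable def co (h : ℂ → ℂ) (n : ℕ) : ℂ := iteratedDeriv n h 0 / (Nat.factorial n)

theorem co_zero (h : ℂ → ℂ) : co h 0 = h 0 := by simp [co]

theorem co_one (h : ℂ → ℂ) : co h 1 = deriv h 0 := by simp [co, iteratedDeriv_one]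

theorem hc_co {F : ℂ → ℂ} (hF : DifferentiableOn ℂ F (ball (0:ℂ) 1)) : HC F (co F) 1 :=
  hc_taylor hF

theorem HC.const_mul {F : ℂ → ℂ} {c : ℕ → ℂ} {r : ℝ} (h : HC F c r) (k : ℂ) :
    HC (fun z => k * F z) (fun n => k * c n) r := fun z hz => by
  simpa [mul_assoc] using (h z hz).mul_left k

theorem dslope_differentiableOn {h : ℂ → ℂ} (hd : DifferentiableOn ℂ h (ball (0:ℂ) 1)) :
    DifferentiableOn ℂ (dslope h 0) (ball (0:ℂ) 1) := by
  intro z hz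
  rcases eq_or_ne z 0 with rfl | hne
  · have hA : AnalyticAt ℂ h 0 :=
      (hd.analyticOnNhd isOpen_ball) 0 (mem_ball_self one_pos)
    obtain ⟨p, hp⟩ := hA
    exact (hp.has_fpower_series_dslope_fslope.analyticAt).differentiableAt.differentiableWithinAt
  · exact (differentiableWithinAt_dslope_of_ne hne).2 (hd z hz)

theorem co_dslope {h : ℂ → ℂ} (hd : DifferentiableOn ℂ h (ball (0:ℂ) 1)) (h0 : h 0 = 0)
    (n : ℕ) : co h (n + 1) = co (dslope h 0) n := by
  have h1 : HC h (co h) 1 := hc_co hd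
  have h2 : HC (fun z => z * dslope h 0 z)
      (fun n => ∑ k ∈ Finset.range (n + 1),
        (if k = 1 then (1:ℂ) else 0) * co (dslope h 0) (n - k)) 1 :=
    (hc_id 1).mul (hc_co (dslope_differentiableOn hd))
  have h2' : HC h (fun n => ∑ k ∈ Finset.range (n + 1),
      (if k = 1 then (1:ℂ) else 0) * co (dslope h 0) (n - k)) 1 := by
    refine h2.congr fun z hz => ?_
    have := sub_smul_dslope h 0 z
    rw [sub_zero, h0, sub_zero, smul_eq_mul] at this
    exact this
  have := h1.unique h2' one_pos one_pos
  have heval := congrFun this (n + 1)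
  rw [heval]
  rw [Finset.sum_congr rfl (fun k _ => by rw [ite_mul, one_mul, zero_mul])]
  rw [Finset.sum_ite_eq' (Finset.range (n + 2)) 1 (fun k => co (dslope h 0) (n + 1 - k))]
  simp

/-- Coefficient bounds for Schwarz functions. -/
theorem schwarz_coeff {w : ℂ → ℂ} (hd : DifferentiableOn ℂ w (ball (0:ℂ) 1))
    (hb : ∀ z ∈ ball (0:ℂ) 1, ‖w z‖ ≤ 1) (h0 : w 0 = 0) :
    ‖co w 1‖ ≤ 1 ∧ ‖co w 2‖ ≤ 1 - ‖co w 1‖ ^ 2 ∧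
      ‖co w 3‖ ≤ 1 - ‖co w 1‖ ^ 2 := by
  have h0mem : (0:ℂ) ∈ ball (0:ℂ) 1 := mem_ball_self one_pos
  set φ : ℂ → ℂ := dslope w 0 with hφ
  have hφd : DifferentiableOn ℂ φ (ball (0:ℂ) 1) := dslope_differentiableOn hd
  have hφb : ∀ z ∈ ball (0:ℂ) 1, ‖φ z‖ ≤ 1 := bound_dslope hd hb h0
  have hφ0 : φ 0 = co w 1 := by rw [co_one, hφ, dslope_same]
  have hx1 : ‖co w 1‖ ≤ 1 := by rw [← hφ0]; exact hφb 0 h0mem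
  have hco2 : co w 2 = deriv φ 0 := by
    have := co_dslope hd h0 1
    rw [this, co_one]
  have hx2 : ‖co w 2‖ ≤ 1 - ‖co w 1‖ ^ 2 := by
    rw [hco2, ← hφ0]
    exact schwarz_pick_zero hφd hφb
  refine ⟨hx1, hx2, ?_⟩
  -- third coefficient
  have hco3 : co w 3 = co φ 2 := co_dslope hd h0 2
  by_cases hc : ‖φ 0‖ = 1
  · -- φ is constant
    have hmax : IsMaxOn (norm ∘ φ) (ball (0:ℂ) 1) 0 := by
      intro x hx
      simp only [Function.comp_apply]
      calc ‖φ x‖ ≤ 1 := hφb x hx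
        _ = ‖φ 0‖ := hc.symm
    have heq := Complex.eqOn_of_isPreconnected_of_isMaxOn_norm
      (convex_ball (0:ℂ) 1).isPreconnected isOpen_ball hφd h0mem hmax
    have hCconst : HC φ (fun n => if n = 0 then φ 0 else 0) 1 := by
      refine (hc_const (φ 0) 1).congr fun z hz => ?_
      exact (heq (by rwa [mem_ball_zero_iff])).symm
    have := (hc_co hφd).unique hCconst one_pos one_pos
    have h2 : co φ 2 = 0 := by rw [congrFun this 2]; simp
    rw [hco3, h2, norm_zero, ← hφ0, hc]
    norm_num
  · have hlt : ‖φ 0‖ < 1 := lt_of_le_of_ne (hφb 0 h0mem) hc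
    have hns : Complex.normSq (φ 0) < 1 := by
      rw [← Complex.sq_norm]; nlinarith [norm_nonneg (φ 0)]
    have hden : ∀ z ∈ ball (0:ℂ) 1, 1 - (starRingEnd ℂ) (φ 0) * φ z ≠ 0 := by
      intro z hz
      have habs : ‖(starRingEnd ℂ) (φ 0) * φ z‖ < 1 := by
        rw [norm_mul, Complex.norm_conj]
        calc ‖φ 0‖ * ‖φ z‖ ≤ ‖φ 0‖ * 1 :=
              mul_le_mul_of_nonneg_left (hφb z hz) (norm_nonneg _)
          _ = ‖φ 0‖ := mul_one _
          _ < 1 := hlt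
      intro hcontra
      rw [sub_eq_zero] at hcontra
      rw [← hcontra] at habs
      simp at habs
    set ψ : ℂ → ℂ := fun z => (φ z - φ 0) / (1 - (starRingEnd ℂ) (φ 0) * φ z) with hψ
    have hψd : DifferentiableOn ℂ ψ (ball (0:ℂ) 1) := by
      apply DifferentiableOn.div
      · exact hφd.sub_const _
      · exact (differentiableOn_const 1).sub ((differentiableOn_const _).mul hφd)
      · exact hden
    have hψb : ∀ z ∈ ball (0:ℂ) 1, ‖ψ z‖ ≤ 1 := by
      intro z hz
      rw [hψ]
      simp only [norm_div]
      exact div_le_one_of_le₀ (mobius_le_one hlt.le (hφb z hz)) (norm_nonneg _)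
    have hψ0 : ψ 0 = 0 := by rw [hψ]; simp
    -- coefficient relation:  φ z - φ 0 = (1 - conj (φ 0) * φ z) * ψ z
    have hrel : ∀ z : ℂ, ‖z‖ < 1 →
        φ z - φ 0 = (1 - (starRingEnd ℂ) (φ 0) * φ z) * ψ z := by
      intro z hz
      have hdz := hden z (by rwa [mem_ball_zero_iff])
      rw [hψ]
      simp only []
      rw [mul_comm, div_mul_eq_mul_div, mul_div_assoc, div_self hdz, mul_one]
    have hL : HC (fun z => φ z - φ 0) (fun n => co φ n - if n = 0 then φ 0 else 0) 1 :=
      (hc_co hφd).sub (hc_const (φ 0) 1)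
    have hR : HC (fun z => (1 - (starRingEnd ℂ) (φ 0) * φ z) * ψ z)
        (fun n => ∑ k ∈ Finset.range (n + 1),
          ((if k = 0 then (1:ℂ) else 0) - (starRingEnd ℂ) (φ 0) * co φ k) * co ψ (n - k)) 1 :=
      (((hc_const 1 1).sub ((hc_co hφd).const_mul _))).mul (hc_co hψd)
    have hL' : HC (fun z => φ z - φ 0)
        (fun n => ∑ k ∈ Finset.range (n + 1),
          ((if k = 0 then (1:ℂ) else 0) - (starRingEnd ℂ) (φ 0) * co φ k) * co ψ (n - k)) 1 :=
      hR.congr fun z hz => (hrel z hz).symm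
    have hkey := hL.unique hL' one_pos one_pos
    have hcoψ0 : co ψ 0 = 0 := by rw [co_zero, hψ0]
    have hE1 := congrFun hkey 1
    have hE2 := congrFun hkey 2
    simp only [Finset.sum_range_succ, Finset.sum_range_zero] at hE1 hE2
    norm_num [hcoψ0, co_zero] at hE1 hE2
    -- hE1 : co φ 1 = (1 - conj (φ 0) * φ 0) * co ψ 1
    -- hE2 : co φ 2 = (1 - conj (φ 0) * φ 0) * co ψ 2 - conj (φ 0) * co φ 1 * co ψ 1
    -- bounds on ψ coefficients
    have hψ1 : ‖co ψ 1‖ ≤ 1 := by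
      rw [co_one, ← dslope_same ψ 0]
      exact bound_dslope hψd hψb hψ0 0 h0mem
    have hψ2 : ‖co ψ 2‖ ≤ 1 - ‖co ψ 1‖ ^ 2 := by
      have hχd := dslope_differentiableOn hψd
      have hχb := bound_dslope hψd hψb hψ0
      have h2 : co ψ 2 = deriv (dslope ψ 0) 0 := by rw [co_dslope hψd hψ0 1, co_one]
      have h1 : co ψ 1 = dslope ψ 0 0 := by rw [co_one, dslope_same]
      rw [h2, h1]
      exact schwarz_pick_zero hχd hχb
    have hconj : (starRingEnd ℂ) (φ 0) * φ 0 = (Complex.normSq (φ 0) : ℂ) := by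
      rw [mul_comm, Complex.mul_conj]
    have hval : co φ 2 = ((1:ℂ) - (Complex.normSq (φ 0) : ℂ)) * co ψ 2
        - (starRingEnd ℂ) (φ 0) * (((1:ℂ) - (Complex.normSq (φ 0) : ℂ)) * co ψ 1) * co ψ 1 := by
      rw [← hconj]
      linear_combination hE2 + (-((starRingEnd ℂ) (φ 0) * co ψ 1)) * hE1
    have habsQ : ‖(1:ℂ) - (Complex.normSq (φ 0) : ℂ)‖ = 1 - Complex.normSq (φ 0) := by
      rw [show (1:ℂ) - (Complex.normSq (φ 0):ℂ) = ((1 - Complex.normSq (φ 0) : ℝ) : ℂ) by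
        push_cast; ring, Complex.norm_real, Real.norm_eq_abs, _root_.abs_of_pos (by linarith)]
    have htri : ‖co φ 2‖ ≤
        (1 - Complex.normSq (φ 0)) * ‖co ψ 2‖
          + ‖φ 0‖ * ((1 - Complex.normSq (φ 0)) * ‖co ψ 1‖)
            * ‖co ψ 1‖ := by
      rw [hval]
      refine le_trans (norm_sub_le _ _) ?_
      rw [norm_mul, norm_mul, norm_mul, norm_mul, Complex.norm_conj, habsQ]
    rw [hco3, ← hφ0]
    have hq1 : (0:ℝ) ≤ ‖co ψ 1‖ := norm_nonneg _
    have hq2 : (0:ℝ) ≤ ‖co ψ 2‖ := norm_nonneg _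
    have hP : (0:ℝ) ≤ ‖φ 0‖ := norm_nonneg _
    have hnsq : Complex.normSq (φ 0) = ‖φ 0‖ ^ 2 := (Complex.sq_norm _).symm
    rw [hnsq] at htri
    nlinarith [htri, hψ1, hψ2, mul_nonneg hq1 hq1,
      mul_nonneg (mul_nonneg hP hq1) hq1,
      sq_nonneg (‖φ 0‖),
      mul_nonneg (sub_nonneg.2 hlt.le) (mul_nonneg hq1 hq1)]
end St17

open St17 in
set_option maxHeartbeats 2000000 in
theorem stmt_17 (α : ℝ) (hα0 : 0 ≤ α) (hα1 : α ≤ (37 - Real.sqrt 505) / 72)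
    (f : ℂ → ℂ) (hf : DifferentiableOn ℂ f (ball (0:ℂ) 1))
    (h0 : f 0 = 0) (h1 : deriv f 0 = 1)
    (hf' : ∀ z ∈ ball (0:ℂ) 1, deriv f z ≠ 0)
    (hfz : ∀ z ∈ ball (0:ℂ) 1, z ≠ 0 → f z ≠ 0)
    (a : ℕ → ℂ) (ha : ∀ n, a n = iteratedDeriv n f 0 / (Nat.factorial n))
    (hstar : ∀ z ∈ ball (0:ℂ) 1, z ≠ 0 → α ≤ (f z / (z * deriv f z)).re) :
    ‖a 4‖ ≤ (1 - α) * (3 - 4 * α) * (4 - 6 * α) / 3 := by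
  have h0mem : (0:ℂ) ∈ ball (0:ℂ) 1 := mem_ball_self one_pos
  -- numerics for α
  have hsq : (22:ℝ) ≤ Real.sqrt 505 := by
    rw [show (505:ℝ) = 505 from rfl]
    nlinarith [Real.sq_sqrt (by norm_num : (505:ℝ) ≥ 0), Real.sqrt_nonneg 505]
  have hα24 : α ≤ 5/24 := by
    calc α ≤ (37 - Real.sqrt 505) / 72 := hα1
      _ ≤ (37 - 22) / 72 := by linarith
      _ ≤ 5/24 := by norm_num
  have hQ : 0 ≤ 36*(1-α)^2 - 35*(1-α) + 5 := by
    have h72 : 35 + Real.sqrt 505 ≤ 72 * (1 - α) := by linarith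
    nlinarith [Real.sq_sqrt (by norm_num : (505:ℝ) ≥ 0), Real.sqrt_nonneg 505]
  -- the auxiliary function g
  have hfd' : DifferentiableOn ℂ (deriv f) (ball (0:ℂ) 1) :=
    ((hf.analyticOnNhd isOpen_ball).deriv).differentiableOn
  set g : ℂ → ℂ := fun z => dslope f 0 z / deriv f z with hgdef
  have hgd : DifferentiableOn ℂ g (ball (0:ℂ) 1) :=
    (dslope_differentiableOn hf).div hfd' hf'
  have hg0 : g 0 = 1 := by rw [hgdef]; simp [dslope_same, h1]
  have hgRe : ∀ z ∈ ball (0:ℂ) 1, α ≤ (g z).re := by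
    intro z hz
    rcases eq_or_ne z 0 with rfl | hne
    · rw [hg0]; norm_num; linarith
    · have hs := hstar z hz hne
      have : g z = f z / (z * deriv f z) := by
        rw [hgdef]
        simp only []
        rw [dslope_of_ne _ hne, slope_def_field]
        rw [h0, sub_zero, sub_zero]
        rw [div_div]
      rw [this]
      exact hs
  have hEq1 : ∀ z : ℂ, ‖z‖ < 1 → f z = (z * deriv f z) * g z := by
    intro z hz
    have hfz' : deriv f z ≠ 0 := hf' z (by rwa [mem_ball_zero_iff])
    have hds := sub_smul_dslope f 0 z
    rw [sub_zero, h0, sub_zero, smul_eq_mul] at hds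
    rw [hgdef]
    simp only []
    field_simp
    linear_combination (-1:ℂ) * hds
  -- the function w
  set τ : ℂ := ((1 - 2*α : ℝ) : ℂ) with hτdef
  have hdenRe : ∀ z ∈ ball (0:ℂ) 1, (1 - α : ℝ) ≤ (g z + τ).re := by
    intro z hz
    have := hgRe z hz
    rw [hτdef]
    rw [Complex.add_re, Complex.ofReal_re]
    linarith
  have hden : ∀ z ∈ ball (0:ℂ) 1, g z + τ ≠ 0 := by
    intro z hz hzero
    have := hdenRe z hz
    rw [hzero] at this
    simp at this
    linarith
  set w : ℂ → ℂ := fun z => (g z - 1) / (g z + τ) with hwdef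
  have hwd : DifferentiableOn ℂ w (ball (0:ℂ) 1) :=
    (hgd.sub_const 1).div (hgd.add_const τ) hden
  have hw0 : w 0 = 0 := by rw [hwdef]; simp [hg0]
  have hwb : ∀ z ∈ ball (0:ℂ) 1, ‖w z‖ ≤ 1 := by
    intro z hz
    rw [hwdef]
    simp only [norm_div]
    refine div_le_one_of_le₀ ?_ (norm_nonneg _)
    -- |g z - 1| ≤ |g z + 1 - 2α|
    have hre := hgRe z hz
    rw [Complex.norm_def, Complex.norm_def]
    apply Real.sqrt_le_sqrt
    rw [hτdef]
    simp only [Complex.normSq_apply, Complex.sub_re, Complex.sub_im, Complex.add_re,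
      Complex.add_im, Complex.one_re, Complex.one_im, Complex.ofReal_re, Complex.ofReal_im]
    nlinarith [mul_nonneg (sub_nonneg.2 hre) (by linarith : (0:ℝ) ≤ 1 - α)]
  have hEq2 : ∀ z : ℂ, ‖z‖ < 1 → g z - 1 = (g z + τ) * w z := by
    intro z hz
    have hdz := hden z (by rwa [mem_ball_zero_iff])
    rw [hwdef]
    simp only []
    rw [mul_comm, div_mul_eq_mul_div, mul_div_assoc, div_self hdz, mul_one]
  -- coefficient sequences
  have hA : HC f (co f) 1 := hc_co hf
  have hG : HC g (co g) 1 := hc_co hgd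
  have hW : HC w (co w) 1 := hc_co hwd
  have hD : HC (deriv f) (co (deriv f)) 1 := hc_co hfd'
  have hDco : ∀ n : ℕ, co (deriv f) n = ((n:ℂ)+1) * co f (n+1) := by
    intro n
    have hcast : ((Nat.factorial (n+1) : ℂ)) = ((n:ℂ)+1) * (Nat.factorial n : ℂ) := by
      rw [Nat.factorial_succ]; push_cast; ring
    have hfac : ((Nat.factorial n : ℂ)) ≠ 0 := Nat.cast_ne_zero.2 n.factorial_ne_zero
    have hn1 : ((n:ℂ)+1) ≠ 0 := Nat.cast_add_one_ne_zero n
    rw [co, co, ← iteratedDeriv_succ', hcast]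
    field_simp
  have hzf' : HC (fun z => z * deriv f z)
      (fun n => ∑ k ∈ Finset.range (n+1), (if k = 1 then (1:ℂ) else 0) * co (deriv f) (n - k)) 1 :=
    (hc_id 1).mul hD
  have hRHS1 : HC f (fun n => ∑ k ∈ Finset.range (n+1),
      (∑ j ∈ Finset.range (k+1), (if j = 1 then (1:ℂ) else 0) * co (deriv f) (k - j))
        * co g (n - k)) 1 :=
    (hzf'.mul hG).congr (fun z hz => (hEq1 z hz).symm)
  have hU1 := hA.unique hRHS1 one_pos one_pos
  have hA0 : co f 0 = 0 := by rw [co_zero, h0]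
  have hA1 : co f 1 = 1 := by rw [co_one, h1]
  have hG0 : co g 0 = 1 := by rw [co_zero, hg0]
  have hN2 := congrFun hU1 2
  have hN3 := congrFun hU1 3
  have hN4 := congrFun hU1 4
  simp only [Finset.sum_range_succ, Finset.sum_range_zero] at hN2 hN3 hN4
  norm_num [hDco] at hN2 hN3 hN4
  simp only [hA0, hA1, hG0, one_mul, mul_one] at hN2 hN3 hN4
  have hA4 : co f 4 = -(co g 1)^3 + (7/6) * co g 1 * co g 2 - co g 3 / 3 := by
    linear_combination (-1/3 : ℂ) * hN4 + (co g 1/2) * hN3 + ((2/3) * co g 2 - (co g 1)^2) * hN2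
  -- equation 2 coefficients
  have hgm1 : HC (fun z => g z - 1) (fun n => co g n - if n = 0 then (1:ℂ) else 0) 1 :=
    hG.sub (hc_const 1 1)
  have hgpτ : HC (fun z => g z + τ) (fun n => co g n + if n = 0 then τ else 0) 1 :=
    hG.add (hc_const τ 1)
  have hRHS2 : HC (fun z => g z - 1) (fun n => ∑ k ∈ Finset.range (n+1),
      (co g k + if k = 0 then τ else 0) * co w (n - k)) 1 :=
    (hgpτ.mul hW).congr fun z hz => (hEq2 z hz).symm
  have hU2 := hgm1.unique hRHS2 one_pos one_pos
  have hW0 : co w 0 = 0 := by rw [co_zero, hw0]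
  have hM1 := congrFun hU2 1
  have hM2 := congrFun hU2 2
  have hM3 := congrFun hU2 3
  simp only [Finset.sum_range_succ, Finset.sum_range_zero] at hM1 hM2 hM3
  norm_num [hW0] at hM1 hM2 hM3
  simp only [hG0, one_mul, mul_one] at hM1 hM2 hM3
  have hσ : (1:ℂ) + τ = ((2 - 2*α : ℝ) : ℂ) := by rw [hτdef]; push_cast; ring
  have hG1 : co g 1 = ((2 - 2*α : ℝ) : ℂ) * co w 1 := by
    rw [← hσ]; linear_combination hM1
  have hG2 : co g 2 = ((2 - 2*α : ℝ) : ℂ) * (co w 2 + co w 1 * co w 1) := by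
    rw [← hσ]; linear_combination hM2 + co w 1 * hM1
  have hG3 : co g 3 = ((2 - 2*α : ℝ) : ℂ) * (co w 3 + 2 * co w 1 * co w 2 + (co w 1)^3) := by
    rw [← hσ]; linear_combination hM3 + co w 1 * hM2 + (co w 2 + co w 1 * co w 1) * hM1
  have hfinal : co f 4 =
      ((-(2-2*α)^3 + (7/6)*(2-2*α)^2 - (2-2*α)/3 : ℝ) : ℂ) * (co w 1)^3
      + (((7/6)*(2-2*α)^2 - (2/3)*(2-2*α) : ℝ) : ℂ) * (co w 1 * co w 2)
      + ((-(2-2*α)/3 : ℝ) : ℂ) * co w 3 := by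
    rw [hA4, hG1, hG2, hG3]
    push_cast
    ring
  -- Schwarz coefficient bounds
  obtain ⟨hx1, hx2, hx3⟩ := schwarz_coeff hwd hwb hw0
  -- put everything together
  have haco : a 4 = co f 4 := by rw [ha 4]; rfl
  set x := ‖co w 1‖ with hxdef
  set y := ‖co w 2‖ with hydef
  set y3 := ‖co w 3‖ with hy3def
  have htri : ‖co f 4‖ ≤
      |(-(2-2*α)^3 + (7/6)*(2-2*α)^2 - (2-2*α)/3 : ℝ)| * x^3
      + |((7/6)*(2-2*α)^2 - (2/3)*(2-2*α) : ℝ)| * (x*y)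
      + |(-(2-2*α)/3 : ℝ)| * y3 := by
    rw [hfinal]
    refine le_trans (norm_add_le _ _) ?_
    gcongr ?_ + ?_
    · refine le_trans (norm_add_le _ _) ?_
      gcongr ?_ + ?_
      · rw [norm_mul, Complex.norm_real, Real.norm_eq_abs, norm_pow]
      · rw [norm_mul, Complex.norm_real, Real.norm_eq_abs, norm_mul]
    · rw [norm_mul, Complex.norm_real, Real.norm_eq_abs]
  -- absolute values of the real coefficients
  have ht19 : 19/24 ≤ 1 - α := by linarith
  have habs1 : |(-(2-2*α)^3 + (7/6)*(2-2*α)^2 - (2-2*α)/3 : ℝ)| =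
      8*(1-α)^3 - (14/3)*(1-α)^2 + (2/3)*(1-α) := by
    rw [_root_.abs_of_nonpos (by nlinarith)]
    ring
  have habs2 : |((7/6)*(2-2*α)^2 - (2/3)*(2-2*α) : ℝ)| =
      (14/3)*(1-α)^2 - (4/3)*(1-α) := by
    rw [_root_.abs_of_nonneg (by nlinarith)]
    ring
  have habs3 : |(-(2-2*α)/3 : ℝ)| = (2/3)*(1-α) := by
    rw [_root_.abs_of_nonpos (by nlinarith)]
    ring
  rw [haco]
  rw [habs1, habs2, habs3] at htri
  refine le_trans htri ?_
  have hx0 : 0 ≤ x := norm_nonneg _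
  have hy0 : 0 ≤ y := norm_nonneg _
  have hy30 : 0 ≤ y3 := norm_nonneg _
  nlinarith [mul_nonneg (mul_nonneg (sub_nonneg.2 hx1) hQ) (mul_nonneg hx0 (by linarith : (0:ℝ) ≤ 1-α)),
    mul_nonneg (sub_nonneg.2 hx1) hQ, mul_nonneg hQ (by linarith : (0:ℝ) ≤ 1-α),
    mul_nonneg (mul_nonneg hx0 hx0) hQ,
    mul_nonneg (sub_nonneg.2 hx2) (by linarith : (0:ℝ) ≤ 1-α),
    mul_nonneg (sub_nonneg.2 hx3) (by linarith : (0:ℝ) ≤ 1-α),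
    mul_nonneg (mul_nonneg (sub_nonneg.2 hx2) (by linarith : (0:ℝ) ≤ 1-α)) hx0,
    mul_nonneg (mul_nonneg hx0 (sub_nonneg.2 hx1)) (by linarith : (0:ℝ) ≤ 1-α),
    sq_nonneg (1-x), sq_nonneg x, mul_nonneg hx0 hy0]
end

section
/- Let h : D → ℂ be holomorphic with h(0) = 0 and h(D) ⊆ D (a Schwarz function), with Taylor expansion h(z) = c_1 z + c_2 z² + c_3 z³ + ⋯. Then |c_2| ≤ 1 - |c_1|² and |c_3| ≤ 1 - |c_1|². -/
open Complex Metric Set Filter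

private lemma mem0 : (0:ℂ) ∈ ball (0:ℂ) 1 := mem_ball_self one_pos



private lemma den_ne {a w : ℂ} (ha : ‖a‖ < 1) (hw : ‖w‖ < 1) :
    (1 : ℂ) - (starRingEnd ℂ) a * w ≠ 0 := by
  intro hcon
  have h1 : (1:ℂ) = (starRingEnd ℂ) a * w := sub_eq_zero.mp hcon
  have h2 : ‖(starRingEnd ℂ) a * w‖ < 1 := by
    rw [norm_mul, Complex.norm_conj]
    nlinarith [norm_nonneg a, norm_nonneg w]
  rw [← h1] at h2; simp at h2

private lemma key_identity (a w : ℂ) :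
    Complex.normSq (1 - (starRingEnd ℂ) a * w) - Complex.normSq (w - a)
      = (1 - Complex.normSq a) * (1 - Complex.normSq w) := by
  have : ((Complex.normSq (1 - (starRingEnd ℂ) a * w) : ℂ)) - Complex.normSq (w - a)
      = ((1:ℂ) - Complex.normSq a) * ((1:ℂ) - Complex.normSq w) := by
    rw [← Complex.mul_conj, ← Complex.mul_conj, ← Complex.mul_conj, ← Complex.mul_conj]
    simp only [map_sub, map_mul, map_one, Complex.conj_conj]
    ring
  exact_mod_cast this

private lemma mobius_lt {a w : ℂ} (ha : ‖a‖ < 1) (hw : ‖w‖ < 1) :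
    ‖(w - a) / (1 - (starRingEnd ℂ) a * w)‖ < 1 := by
  have hne := den_ne ha hw
  have hpos : 0 < ‖1 - (starRingEnd ℂ) a * w‖ := norm_pos_iff.mpr hne
  rw [norm_div, div_lt_one hpos]
  have hk := key_identity a w
  have h1 : Complex.normSq a < 1 := by rw [← Complex.sq_norm]; nlinarith [norm_nonneg a]
  have h2 : Complex.normSq w < 1 := by rw [← Complex.sq_norm]; nlinarith [norm_nonneg w]
  have h3 : Complex.normSq (w - a) < Complex.normSq (1 - (starRingEnd ℂ) a * w) := by nlinarith
  rw [← Complex.sq_norm, ← Complex.sq_norm] at h3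
  nlinarith [norm_nonneg (w - a), norm_nonneg (1 - (starRingEnd ℂ) a * w)]


private lemma eq_const_of_abs_eq_one {g : ℂ → ℂ} (hg : DifferentiableOn ℂ g (ball 0 1))
    (hb : ∀ z ∈ ball (0:ℂ) 1, ‖g z‖ ≤ 1) {z₀ : ℂ} (hz₀ : z₀ ∈ ball (0:ℂ) 1)
    (h1 : ‖g z₀‖ = 1) : Set.EqOn g (fun _ => g z₀) (ball 0 1) := by
  have hmax : IsMaxOn (norm ∘ g) (ball (0:ℂ) 1) z₀ := by
    intro z hz
    simp only [Function.comp_apply, h1]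
    exact hb z hz
  exact Complex.eqOn_of_isPreconnected_of_isMaxOn_norm
    (convex_ball (0:ℂ) 1).isPreconnected isOpen_ball hg hz₀ hmax

private lemma lt_one_of {g : ℂ → ℂ} (hg : DifferentiableOn ℂ g (ball 0 1))
    (hb : ∀ z ∈ ball (0:ℂ) 1, ‖g z‖ ≤ 1) (h0 : ‖g 0‖ < 1) :
    ∀ z ∈ ball (0:ℂ) 1, ‖g z‖ < 1 := by
  intro z hz
  rcases lt_or_eq_of_le (hb z hz) with h | h
  · exact h
  · exfalso
    have := eq_const_of_abs_eq_one hg hb hz h mem0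
    rw [this, h] at h0
    exact lt_irrefl _ h0

private lemma derivs_zero_of_const {g : ℂ → ℂ} (hg : DifferentiableOn ℂ g (ball 0 1))
    (hb : ∀ z ∈ ball (0:ℂ) 1, ‖g z‖ ≤ 1) (h1 : ‖g 0‖ = 1) :
    deriv g 0 = 0 ∧ deriv (deriv g) 0 = 0 := by
  have heq := eq_const_of_abs_eq_one hg hb mem0 h1
  have hev : ∀ z ∈ ball (0:ℂ) 1, g =ᶠ[nhds z] fun _ => g 0 := fun z hz =>
    Filter.eventuallyEq_of_mem (isOpen_ball.mem_nhds hz) heq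
  have hd : ∀ z ∈ ball (0:ℂ) 1, deriv g z = 0 := fun z hz => by
    rw [(hev z hz).deriv_eq]; exact deriv_const _ _
  have hev2 : deriv g =ᶠ[nhds (0:ℂ)] fun _ => (0:ℂ) :=
    Filter.eventuallyEq_of_mem (isOpen_ball.mem_nhds mem0) hd
  refine ⟨hd 0 mem0, ?_⟩
  rw [hev2.deriv_eq]; exact deriv_const _ _


private lemma shift_derivs {g : ℂ → ℂ} (hg : AnalyticOnNhd ℂ g (ball 0 1)) :
    deriv (fun z => z * g z) 0 = g 0 ∧
    deriv (deriv (fun z => z * g z)) 0 = 2 * deriv g 0 ∧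
    deriv (deriv (deriv (fun z => z * g z))) 0 = 3 * deriv (deriv g) 0 := by
  have hgd : ∀ z ∈ ball (0:ℂ) 1, HasDerivAt g (deriv g z) z := fun z hz =>
    (hg z hz).differentiableAt.hasDerivAt
  have hg1 : ∀ z ∈ ball (0:ℂ) 1, HasDerivAt (deriv g) (deriv (deriv g) z) z := fun z hz =>
    ((hg.deriv) z hz).differentiableAt.hasDerivAt
  have hg2 : ∀ z ∈ ball (0:ℂ) 1, HasDerivAt (deriv (deriv g)) (deriv (deriv (deriv g)) z) z :=
    fun z hz => ((hg.deriv.deriv) z hz).differentiableAt.hasDerivAt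
  have h1 : ∀ z ∈ ball (0:ℂ) 1, HasDerivAt (fun w => w * g w) (g z + z * deriv g z) z := by
    intro z hz
    have := (hasDerivAt_id' z).mul (hgd z hz)
    exact this.congr_deriv (by ring)
  have e1 : Set.EqOn (deriv (fun w => w * g w)) (fun z => g z + z * deriv g z) (ball 0 1) :=
    fun z hz => (h1 z hz).deriv
  have h2 : ∀ z ∈ ball (0:ℂ) 1,
      HasDerivAt (fun w => g w + w * deriv g w) (2 * deriv g z + z * deriv (deriv g) z) z := by
    intro z hz
    have := (hgd z hz).add ((hasDerivAt_id' z).mul (hg1 z hz))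
    exact this.congr_deriv (by ring)
  have e2 : Set.EqOn (deriv (deriv (fun w => w * g w)))
      (fun z => 2 * deriv g z + z * deriv (deriv g) z) (ball 0 1) := by
    intro z hz
    have hev : deriv (fun w => w * g w) =ᶠ[nhds z] fun w => g w + w * deriv g w :=
      Filter.eventuallyEq_of_mem (isOpen_ball.mem_nhds hz) e1
    rw [hev.deriv_eq]
    exact (h2 z hz).deriv
  refine ⟨by simpa using (h1 0 mem0).deriv, by simpa using e2 mem0, ?_⟩
  have hev : deriv (deriv (fun w => w * g w)) =ᶠ[nhds (0:ℂ)]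
      fun z => 2 * deriv g z + z * deriv (deriv g) z :=
    Filter.eventuallyEq_of_mem (isOpen_ball.mem_nhds mem0) e2
  rw [hev.deriv_eq]
  have h3 : HasDerivAt (fun z => 2 * deriv g z + z * deriv (deriv g) z)
      (3 * deriv (deriv g) 0) 0 := by
    have := ((hg1 0 mem0).const_mul 2).add ((hasDerivAt_id' 0).mul (hg2 0 mem0))
    exact this.congr_deriv (by ring)
  exact h3.deriv
private lemma absA {a : ℂ} (ha : ‖a‖ < 1) :
    ‖1 - (starRingEnd ℂ) a * a‖ = 1 - ‖a‖ ^ 2 := by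
  have h : (1 : ℂ) - (starRingEnd ℂ) a * a = ((1 - ‖a‖ ^ 2 : ℝ) : ℂ) := by
    rw [mul_comm, Complex.mul_conj]
    norm_cast
    rw [← Complex.sq_norm]
  rw [h, Complex.norm_real, Real.norm_eq_abs, _root_.abs_of_nonneg (by nlinarith [norm_nonneg a])]

private lemma mobius_hasDeriv {g : ℂ → ℂ} (hg : DifferentiableOn ℂ g (ball 0 1))
    (hlt : ∀ z ∈ ball (0:ℂ) 1, ‖g z‖ < 1) {z : ℂ} (hz : z ∈ ball (0:ℂ) 1) :
    HasDerivAt (fun w => (g w - g 0) / (1 - (starRingEnd ℂ) (g 0) * g w))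
      ((1 - (starRingEnd ℂ) (g 0) * g 0) * deriv g z
        / (1 - (starRingEnd ℂ) (g 0) * g z) ^ 2) z := by
  have ha : ‖g 0‖ < 1 := hlt 0 mem0
  have hgz : HasDerivAt g (deriv g z) z :=
    (hg.differentiableAt (isOpen_ball.mem_nhds hz)).hasDerivAt
  have hnum : HasDerivAt (fun w => g w - g 0) (deriv g z) z := hgz.sub_const _
  have hden : HasDerivAt (fun w => (1:ℂ) - (starRingEnd ℂ) (g 0) * g w)
      (-((starRingEnd ℂ) (g 0) * deriv g z)) z := by
    simpa using (hgz.const_mul ((starRingEnd ℂ) (g 0))).const_sub 1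
  have hne := den_ne ha (hlt z hz)
  have h := hnum.div hden hne
  refine h.congr_deriv ?_
  field_simp
  ring
private lemma wiener1 {g : ℂ → ℂ} (hg : DifferentiableOn ℂ g (ball 0 1))
    (hb : ∀ z ∈ ball (0:ℂ) 1, ‖g z‖ ≤ 1) :
    ‖deriv g 0‖ ≤ 1 - ‖g 0‖ ^ 2 := by
  by_cases h1 : ‖g 0‖ = 1
  · rw [(derivs_zero_of_const hg hb h1).1, h1]; simp
  have ha : ‖g 0‖ < 1 := lt_of_le_of_ne (hb 0 mem0) h1
  have hlt := lt_one_of hg hb ha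
  set u := (starRingEnd ℂ) (g 0) with hu
  set φ := fun w => (g w - g 0) / (1 - u * g w) with hφ
  have hAne : (1:ℂ) - u * g 0 ≠ 0 := den_ne ha ha
  have hφd : DifferentiableOn ℂ φ (ball 0 1) :=
    (hg.sub (differentiableOn_const _)).div
      ((differentiableOn_const _).sub ((differentiableOn_const u).mul hg))
      (fun z hz => den_ne ha (hlt z hz))
  have hφmap : Set.MapsTo φ (ball (0:ℂ) 1) (ball (0:ℂ) 1) := by
    intro z hz
    rw [mem_ball_zero_iff]
    exact mobius_lt ha (hlt z hz)
  have hφ0 : φ 0 = 0 := by simp [hφ]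
  have hsch := Complex.norm_deriv_le_one_of_mapsTo_ball hφd
    (by rw [hφ0]; exact hφmap.mono_right ball_subset_closedBall) one_pos
  have hd0 : deriv φ 0 = (1 - u * g 0) * deriv g 0 / (1 - u * g 0) ^ 2 :=
    (mobius_hasDeriv hg hlt mem0).deriv
  have hsimp : (1 - u * g 0) * deriv g 0 / (1 - u * g 0) ^ 2 = deriv g 0 / (1 - u * g 0) := by
    field_simp
  rw [hd0, hsimp, norm_div, absA ha] at hsch
  have hApos : (0:ℝ) < 1 - ‖g 0‖ ^ 2 := by nlinarith [norm_nonneg (g 0)]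
  exact (div_le_one hApos).mp hsch
private lemma wiener2 {g : ℂ → ℂ} (hg : DifferentiableOn ℂ g (ball 0 1))
    (hb : ∀ z ∈ ball (0:ℂ) 1, ‖g z‖ ≤ 1) :
    ‖deriv (deriv g) 0 / 2‖ ≤ 1 - ‖g 0‖ ^ 2 := by
  by_cases h1 : ‖g 0‖ = 1
  · rw [(derivs_zero_of_const hg hb h1).2, h1]; simp
  have ha : ‖g 0‖ < 1 := lt_of_le_of_ne (hb 0 mem0) h1
  have hlt := lt_one_of hg hb ha
  set u := (starRingEnd ℂ) (g 0) with hu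
  set φ := fun w => (g w - g 0) / (1 - u * g w) with hφ
  set A : ℂ := 1 - u * g 0 with hA
  have hAne : A ≠ 0 := den_ne ha ha
  have hφd : DifferentiableOn ℂ φ (ball 0 1) :=
    (hg.sub (differentiableOn_const _)).div
      ((differentiableOn_const _).sub ((differentiableOn_const u).mul hg))
      (fun z hz => den_ne ha (hlt z hz))
  have hφmap : Set.MapsTo φ (ball (0:ℂ) 1) (ball (0:ℂ) 1) := by
    intro z hz
    rw [mem_ball_zero_iff]
    exact mobius_lt ha (hlt z hz)
  have hφ0 : φ 0 = 0 := by simp [hφ]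
  -- ψ = dslope φ 0
  set ψ := dslope φ 0 with hψ
  have hψd : DifferentiableOn ℂ ψ (ball 0 1) :=
    (differentiableOn_dslope (isOpen_ball.mem_nhds mem0)).mpr hφd
  have hψb : ∀ z ∈ ball (0:ℂ) 1, ‖ψ z‖ ≤ 1 := by
    intro z hz
    have hmaps' : Set.MapsTo φ (ball (0:ℂ) 1) (ball (φ 0) 1) := by rwa [hφ0]
    have := Complex.norm_dslope_le_div_of_mapsTo_ball hφd (hmaps'.mono_right ball_subset_closedBall) hz
    simpa using this
  have hw := wiener1 hψd hψb
  have hψ0 : ψ 0 = deriv φ 0 := dslope_same φ 0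
  -- φ = z * ψ z
  have hφz : φ = fun z => z * ψ z := by
    funext z
    by_cases hz : z = 0
    · subst hz; simp [hφ0]
    · rw [hψ, dslope_of_ne _ hz, slope_def_field]
      field_simp [hφ0]
      rw [hφ0, sub_zero, sub_zero, mul_comm]
  have hψan : AnalyticOnNhd ℂ ψ (ball 0 1) := hψd.analyticOnNhd isOpen_ball
  obtain ⟨-, hs2, -⟩ := shift_derivs hψan
  have hφ2 : deriv (deriv φ) 0 = 2 * deriv ψ 0 := by rw [hφz]; exact hs2
  -- deriv φ on the ball
  have e1 : Set.EqOn (deriv φ) (fun z => A * deriv g z / (1 - u * g z) ^ 2) (ball 0 1) :=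
    fun z hz => (mobius_hasDeriv hg hlt hz).deriv
  have hgan : AnalyticOnNhd ℂ g (ball 0 1) := hg.analyticOnNhd isOpen_ball
  have hg'0 : HasDerivAt (deriv g) (deriv (deriv g) 0) 0 :=
    ((hgan.deriv) 0 mem0).differentiableAt.hasDerivAt
  have hg0 : HasDerivAt g (deriv g 0) 0 := (hgan 0 mem0).differentiableAt.hasDerivAt
  have hnum : HasDerivAt (fun z => A * deriv g z) (A * deriv (deriv g) 0) 0 := hg'0.const_mul A
  have hden1 : HasDerivAt (fun z => (1:ℂ) - u * g z) (-(u * deriv g 0)) 0 := by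
    simpa using (hg0.const_mul u).const_sub 1
  have hdenf : HasDerivAt (fun z => ((1:ℂ) - u * g z) ^ 2) (2 * A * (-(u * deriv g 0))) 0 := by
    have := hden1.pow 2
    exact this.congr_deriv (by rw [hA]; norm_num)
  have hden0 : ((1:ℂ) - u * g 0) ^ 2 ≠ 0 := pow_ne_zero _ hAne
  have hq := hnum.div hdenf hden0
  have e2 : deriv (deriv φ) 0 =
      (A * deriv (deriv g) 0 * ((1 - u * g 0) ^ 2) -
        A * deriv g 0 * (2 * A * (-(u * deriv g 0)))) / (((1 - u * g 0) ^ 2) ^ 2) := by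
    have hev : deriv φ =ᶠ[nhds (0:ℂ)] fun z => A * deriv g z / (1 - u * g z) ^ 2 :=
      Filter.eventuallyEq_of_mem (isOpen_ball.mem_nhds mem0) e1
    rw [hev.deriv_eq]
    exact hq.deriv
  have ha1 : deriv φ 0 = deriv g 0 / A := by
    have := (mobius_hasDeriv hg hlt mem0).deriv
    rw [this, ← hA]
    field_simp
  -- key algebraic identity
  have key : deriv (deriv g) 0 / 2 = A * (deriv ψ 0 - u * (deriv φ 0) ^ 2) := by
    rw [← hA, hφ2, eq_div_iff (pow_ne_zero 2 (pow_ne_zero 2 hAne))] at e2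
    have e3 : 2 * deriv ψ 0 * A ^ 2 = A * deriv (deriv g) 0 + 2 * u * (deriv g 0) ^ 2 := by
      apply mul_left_cancel₀ (pow_ne_zero 2 hAne)
      linear_combination e2
    rw [ha1]
    field_simp
    simp only [hA] at e3 ⊢
    linear_combination (-1 : ℂ) * e3
  rw [key, norm_mul, hA, absA ha]
  have hbnd : ‖deriv ψ 0 - u * (deriv φ 0) ^ 2‖ ≤ 1 := by
    have htri : ‖deriv ψ 0 - u * (deriv φ 0) ^ 2‖ ≤
        ‖deriv ψ 0‖ + ‖u * (deriv φ 0) ^ 2‖ :=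
      norm_sub_le _ _
    have h2 : ‖u * (deriv φ 0) ^ 2‖ =
        ‖g 0‖ * ‖deriv φ 0‖ ^ 2 := by
      rw [norm_mul, norm_pow, hu, Complex.norm_conj]
    rw [hψ0] at hw
    have h3 : ‖deriv ψ 0‖ ≤ 1 - ‖deriv φ 0‖ ^ 2 := hw
    nlinarith [norm_nonneg (deriv φ 0), norm_nonneg (g 0)]
  have hApos : (0:ℝ) ≤ 1 - ‖g 0‖ ^ 2 := by nlinarith [norm_nonneg (g 0)]
  calc (1 - ‖g 0‖ ^ 2) * ‖deriv ψ 0 - u * (deriv φ 0) ^ 2‖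
      ≤ (1 - ‖g 0‖ ^ 2) * 1 := by
        exact mul_le_mul_of_nonneg_left hbnd hApos
    _ = 1 - ‖g 0‖ ^ 2 := mul_one _
theorem stmt_18 (h : ℂ → ℂ) (hh : DifferentiableOn ℂ h (ball (0:ℂ) 1))
    (h0 : h 0 = 0)
    (hmap : ∀ z ∈ ball (0:ℂ) 1, ‖h z‖ < 1)
    (c : ℕ → ℂ) (hc : ∀ n, c n = iteratedDeriv n h 0 / (Nat.factorial n)) :
    ‖c 2‖ ≤ 1 - (‖c 1‖) ^ 2 ∧
      ‖c 3‖ ≤ 1 - (‖c 1‖) ^ 2 := by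
  set g := dslope h 0 with hgdef
  have hgd : DifferentiableOn ℂ g (ball 0 1) :=
    (differentiableOn_dslope (isOpen_ball.mem_nhds mem0)).mpr hh
  have hmaps : Set.MapsTo h (ball (0:ℂ) 1) (ball (h 0) 1) := by
    rw [h0]
    intro z hz
    rw [mem_ball_zero_iff]
    exact hmap z hz
  have hgb : ∀ z ∈ ball (0:ℂ) 1, ‖g z‖ ≤ 1 := by
    intro z hz
    have := Complex.norm_dslope_le_div_of_mapsTo_ball hh (hmaps.mono_right ball_subset_closedBall) hz
    simpa using this
  have hzg : h = fun z => z * g z := by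
    funext z
    by_cases hz : z = 0
    · subst hz; simpa using h0
    · rw [hgdef, dslope_of_ne _ hz, slope_def_field]
      field_simp [h0]
      rw [h0, sub_zero, sub_zero, mul_comm]
  have hgan : AnalyticOnNhd ℂ g (ball 0 1) := hgd.analyticOnNhd isOpen_ball
  obtain ⟨hs1, hs2, hs3⟩ := shift_derivs hgan
  have hc1 : c 1 = g 0 := by
    rw [hc 1, iteratedDeriv_one, hzg]
    simp [hs1]
  have hc2 : c 2 = deriv g 0 := by
    rw [hc 2, show ((2:ℕ) : ℕ) = 1 + 1 from rfl, iteratedDeriv_succ, iteratedDeriv_one, hzg]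
    rw [hs2]
    norm_num [Nat.factorial]
  have hc3 : c 3 = deriv (deriv g) 0 / 2 := by
    rw [hc 3, show ((3:ℕ) : ℕ) = 2 + 1 from rfl, iteratedDeriv_succ,
      show ((2:ℕ) : ℕ) = 1 + 1 from rfl, iteratedDeriv_succ, iteratedDeriv_one, hzg]
    rw [hs3]
    norm_num [Nat.factorial]
    ring
  constructor
  · rw [hc1, hc2]
    exact wiener1 hgd hgb
  · rw [hc1, hc3]
    exact wiener2 hgd hgb
end

section
/- For 0 ≤ α ≤ 1/2, the function f(z) = z/(1-(1-2α)z)^{2(1-α)/(1-2α)} for α ≠ 1/2 (and f(z) = z e^z for α = 1/2) satisfies f(0) = 0, f'(0) = 1, and Re(f(z)/(z f'(z))) ≥ α for all z ∈ D ∖ {0}; moreover its fourth Taylor coefficient equals (1-α)(3-4α)(4-6α)/3, showing sharpness of the fourth-coefficient bound for almost starlike functions of order α. -/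
open Complex Metric

lemma aux_base19 (c w z : ℂ) (hz : 0 < (1 - c*z).re) :
    HasDerivAt (fun z => (1 - c*z)^w) (w * (1 - c*z)^(w-1) * (-c)) z := by
  have h : HasDerivAt (fun z : ℂ => 1 - c*z) (-c) z := by
    simpa using ((hasDerivAt_id z).const_mul c).const_sub 1
  exact h.cpow_const (Complex.mem_slitPlane_iff.mpr (Or.inl hz))

theorem stmt_19 (α : ℝ) (hα0 : 0 ≤ α) (hα1 : α ≤ 1/2)
    (f : ℂ → ℂ)
    (hf : ∀ z : ℂ, f z = if α = 1/2 then z * Complex.exp z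
      else z * (1 - (1 - 2 * (α:ℂ)) * z) ^ (-(2 * (1 - (α:ℂ)) / (1 - 2 * (α:ℂ))))) :
    f 0 = 0 ∧ deriv f 0 = 1 ∧
      (∀ z ∈ ball (0:ℂ) 1, z ≠ 0 → α ≤ (f z / (z * deriv f z)).re) ∧
      iteratedDeriv 4 f 0 / (Nat.factorial 4) =
        ((1 - α) * (3 - 4 * α) * (4 - 6 * α) / 3 : ℂ) := by
  by_cases hhalf : α = 1/2
  · -- exponential case
    have hfe : f = fun z => z * Complex.exp z := funext fun z => by rw [hf z, if_pos hhalf]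
    have h1 : ∀ z : ℂ, HasDerivAt f (1 * Complex.exp z + z * Complex.exp z) z := by
      intro z
      rw [hfe]
      exact (hasDerivAt_id z).mul (Complex.hasDerivAt_exp z)
    have e1 : deriv f = fun z => 1 * Complex.exp z + z * Complex.exp z :=
      funext fun z => (h1 z).deriv
    have h2 : ∀ z : ℂ, HasDerivAt (fun z => 1 * Complex.exp z + z * Complex.exp z)
        (1 * Complex.exp z + (1 * Complex.exp z + z * Complex.exp z)) z := fun z =>
      ((Complex.hasDerivAt_exp z).const_mul 1).add ((hasDerivAt_id z).mul (Complex.hasDerivAt_exp z))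
    have e2 : deriv (deriv f) = fun z => 1 * Complex.exp z + (1 * Complex.exp z + z * Complex.exp z) := by
      rw [e1]; exact funext fun z => (h2 z).deriv
    have h3 : ∀ z : ℂ, HasDerivAt (fun z => 1 * Complex.exp z + (1 * Complex.exp z + z * Complex.exp z))
        (1 * Complex.exp z + (1 * Complex.exp z + (1 * Complex.exp z + z * Complex.exp z))) z := fun z =>
      ((Complex.hasDerivAt_exp z).const_mul 1).add (h2 z)
    have e3 : deriv (deriv (deriv f)) = fun z =>
        1 * Complex.exp z + (1 * Complex.exp z + (1 * Complex.exp z + z * Complex.exp z)) := by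
      rw [e2]; exact funext fun z => (h3 z).deriv
    have h4 : HasDerivAt (fun z => 1 * Complex.exp z + (1 * Complex.exp z + (1 * Complex.exp z + z * Complex.exp z)))
        (1 * Complex.exp 0 + (1 * Complex.exp 0 + (1 * Complex.exp 0 + (1 * Complex.exp 0 + 0 * Complex.exp 0)))) 0 :=
      ((Complex.hasDerivAt_exp 0).const_mul 1).add (h3 0)
    refine ⟨by simp [hfe], by rw [e1]; simp, ?_, ?_⟩
    · intro z hzb hz0
      have hratio : f z / (z * deriv f z) = 1 / (1 + z) := by
        have h1z : (1:ℂ) + z ≠ 0 := by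
          intro h
          have : z = -1 := by linear_combination h
          rw [this] at hzb
          simp at hzb
        rw [hf z, if_pos hhalf, e1]
        have hez : Complex.exp z ≠ 0 := Complex.exp_ne_zero z
        have hD : z * (1 * Complex.exp z + z * Complex.exp z) ≠ 0 := by
          rw [show z * (1 * Complex.exp z + z * Complex.exp z) = z * Complex.exp z * (1+z) by ring]
          exact mul_ne_zero (mul_ne_zero hz0 hez) h1z
        rw [div_eq_div_iff hD h1z]
        ring
      rw [hratio, hhalf]
      rw [Complex.div_re]
      have hx : z.re ^ 2 + z.im ^ 2 < 1 := by
        have hb := mem_ball_zero_iff.mp hzb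
        have h2 := Complex.sq_norm z
        rw [Complex.normSq_apply] at h2
        nlinarith [norm_nonneg z]
      have hnsq : 0 < Complex.normSq (1 + z) := by
        rw [Complex.normSq_pos]
        intro h
        have : z = -1 := by linear_combination h
        rw [this] at hzb
        simp at hzb
      rw [← add_div, le_div_iff₀ hnsq]
      simp only [Complex.normSq_apply, Complex.add_re, Complex.add_im, Complex.one_re,
        Complex.one_im, Complex.zero_re, Complex.zero_im]
      norm_num
      nlinarith
    · have hi : iteratedDeriv 4 f = deriv (deriv (deriv (deriv f))) := by
        simp [iteratedDeriv_succ, iteratedDeriv_zero]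
      rw [hi, e3, h4.deriv, hhalf]
      push_cast
      norm_num [Nat.factorial]
  · -- cpow case
    set c : ℂ := 1 - 2*(α:ℂ) with hc
    set B : ℂ := -(2 * (1 - (α:ℂ)) / (1 - 2 * (α:ℂ))) with hB
    have hαlt : α < 1/2 := lt_of_le_of_ne hα1 hhalf
    have hcre : c.re = 1 - 2*α := by simp [hc]
    have hcim : c.im = 0 := by simp [hc]
    have hcne : c ≠ 0 := by
      intro h
      rw [h] at hcre
      simp at hcre
      linarith
    have hBc : B * c = -(2 * (1 - (α:ℂ))) := by
      rw [hB, hc]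
      field_simp
      rw [mul_div_assoc, div_self (by rw [← hc]; exact hcne), mul_one]
    -- the open set where everything is smooth
    set U : Set ℂ := {z : ℂ | 0 < (1 - c*z).re} with hU
    have hUopen : IsOpen U :=
      isOpen_lt continuous_const (Complex.continuous_re.comp (by continuity))
    have h0U : (0:ℂ) ∈ U := by simp [hU]
    have hballU : ball (0:ℂ) 1 ⊆ U := by
      intro z hz
      have hb : ‖z‖ < 1 := by
        have := mem_ball_zero_iff.mp hz
        exact this
      have habs : ‖c‖ ≤ 1 := by
        have : c = ((1 - 2*α : ℝ) : ℂ) := by rw [hc]; push_cast; ring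
        rw [this, Complex.norm_real, Real.norm_eq_abs]
        rw [_root_.abs_of_nonneg (by linarith)]
        linarith
      have h1 : (c*z).re ≤ ‖c*z‖ := Complex.re_le_norm _
      have h2 : ‖c*z‖ < 1 := by
        rw [norm_mul]
        calc ‖c‖ * ‖z‖ ≤ 1 * ‖z‖ := by
              apply mul_le_mul_of_nonneg_right habs (norm_nonneg z)
          _ < 1 := by rwa [one_mul]
      show 0 < (1 - c*z).re
      rw [Complex.sub_re, Complex.one_re]
      linarith
    have hfz : ∀ z : ℂ, f z = z * (1 - c*z)^B := fun z => by rw [hf z, if_neg hhalf]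
    -- derivative chain
    have hF1 : ∀ z ∈ U, HasDerivAt f
        (1 * (1 - c*z)^B + z * (B * (1 - c*z)^(B-1) * (-c))) z := by
      intro z hz
      have h := (hasDerivAt_id z).mul (aux_base19 c B z hz)
      exact h.congr_of_eventuallyEq (Filter.Eventually.of_forall fun w => by simpa using hfz w)
    have hF2 : ∀ z ∈ U, HasDerivAt (fun z => 1 * (1 - c*z)^B + z * (B * (1 - c*z)^(B-1) * (-c)))
        (1 * (B * (1 - c*z)^(B-1) * (-c)) +
          (1 * (B * (1 - c*z)^(B-1) * (-c)) + z * (B * ((B-1) * (1 - c*z)^(B-1-1) * (-c)) * (-c)))) z := by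
      intro z hz
      exact ((aux_base19 c B z hz).const_mul 1).add
        ((hasDerivAt_id z).mul (((aux_base19 c (B-1) z hz).const_mul B).mul_const (-c)))
    have hF3 : ∀ z ∈ U, HasDerivAt (fun z => 1 * (B * (1 - c*z)^(B-1) * (-c)) +
          (1 * (B * (1 - c*z)^(B-1) * (-c)) + z * (B * ((B-1) * (1 - c*z)^(B-1-1) * (-c)) * (-c))))
        (1 * (B * ((B-1) * (1 - c*z)^(B-1-1) * (-c)) * (-c)) +
          (1 * (B * ((B-1) * (1 - c*z)^(B-1-1) * (-c)) * (-c)) +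
            (1 * (B * ((B-1) * (1 - c*z)^(B-1-1) * (-c)) * (-c)) +
              z * (B * ((B-1) * ((B-1-1) * (1 - c*z)^(B-1-1-1) * (-c)) * (-c)) * (-c))))) z := by
      intro z hz
      have hd1 : HasDerivAt (fun z => 1 * (B * (1 - c*z)^(B-1) * (-c)))
          (1 * (B * ((B-1) * (1 - c*z)^(B-1-1) * (-c)) * (-c))) z :=
        ((((aux_base19 c (B-1) z hz).const_mul B).mul_const (-c)).const_mul 1)
      have hd2 : HasDerivAt (fun z => z * (B * ((B-1) * (1 - c*z)^(B-1-1) * (-c)) * (-c)))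
          (1 * (B * ((B-1) * (1 - c*z)^(B-1-1) * (-c)) * (-c)) +
            z * (B * ((B-1) * ((B-1-1) * (1 - c*z)^(B-1-1-1) * (-c)) * (-c)) * (-c))) z := by
        have := (hasDerivAt_id z).mul
          (((((aux_base19 c (B-1-1) z hz).const_mul (B-1)).mul_const (-c)).const_mul B).mul_const (-c))
        exact this
      exact hd1.add (hd1.add hd2)
    have hF4 : HasDerivAt (fun z => 1 * (B * ((B-1) * (1 - c*z)^(B-1-1) * (-c)) * (-c)) +
          (1 * (B * ((B-1) * (1 - c*z)^(B-1-1) * (-c)) * (-c)) +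
            (1 * (B * ((B-1) * (1 - c*z)^(B-1-1) * (-c)) * (-c)) +
              z * (B * ((B-1) * ((B-1-1) * (1 - c*z)^(B-1-1-1) * (-c)) * (-c)) * (-c)))))
        (4 * (B * (B-1) * (B-1-1) * (-c)^3)) 0 := by
      have hd1 : HasDerivAt (fun z : ℂ => 1 * (B * ((B-1) * (1 - c*z)^(B-1-1) * (-c)) * (-c)))
          (1 * (B * ((B-1) * ((B-1-1) * (1 - c*(0:ℂ))^(B-1-1-1) * (-c)) * (-c)) * (-c))) 0 :=
        (((((aux_base19 c (B-1-1) 0 h0U).const_mul (B-1)).mul_const (-c)).const_mul B).mul_const (-c)).const_mul 1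
      have hd2 : HasDerivAt (fun z : ℂ => z * (B * ((B-1) * ((B-1-1) * (1 - c*z)^(B-1-1-1) * (-c)) * (-c)) * (-c)))
          (1 * (B * ((B-1) * ((B-1-1) * (1 - c*(0:ℂ))^(B-1-1-1) * (-c)) * (-c)) * (-c)) +
            0 * (B * ((B-1) * ((B-1-1) * ((B-1-1-1) * (1 - c*(0:ℂ))^(B-1-1-1-1) * (-c)) * (-c)) * (-c)) * (-c))) 0 := by
        have := (hasDerivAt_id (0:ℂ)).mul
          ((((((aux_base19 c (B-1-1-1) 0 h0U).const_mul (B-1-1)).mul_const (-c)).const_mul (B-1)).mul_const (-c)).const_mul B |>.mul_const (-c))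
        exact this
      have h := hd1.add (hd1.add (hd1.add hd2))
      refine h.congr_deriv ?_
      simp [Complex.one_cpow]
      ring
    have e1 : Set.EqOn (deriv f) (fun z => 1 * (1 - c*z)^B + z * (B * (1 - c*z)^(B-1) * (-c))) U :=
      fun z hz => (hF1 z hz).deriv
    have e2 : Set.EqOn (deriv (deriv f)) (fun z => 1 * (B * (1 - c*z)^(B-1) * (-c)) +
        (1 * (B * (1 - c*z)^(B-1) * (-c)) + z * (B * ((B-1) * (1 - c*z)^(B-1-1) * (-c)) * (-c)))) U := by
      intro z hz
      have heq : deriv f =ᶠ[nhds z] (fun z => 1 * (1 - c*z)^B + z * (B * (1 - c*z)^(B-1) * (-c))) :=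
        Filter.eventuallyEq_of_mem (hUopen.mem_nhds hz) e1
      rw [heq.deriv_eq]
      exact (hF2 z hz).deriv
    have e3 : Set.EqOn (deriv (deriv (deriv f))) (fun z => 1 * (B * ((B-1) * (1 - c*z)^(B-1-1) * (-c)) * (-c)) +
          (1 * (B * ((B-1) * (1 - c*z)^(B-1-1) * (-c)) * (-c)) +
            (1 * (B * ((B-1) * (1 - c*z)^(B-1-1) * (-c)) * (-c)) +
              z * (B * ((B-1) * ((B-1-1) * (1 - c*z)^(B-1-1-1) * (-c)) * (-c)) * (-c))))) U := by
      intro z hz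
      have heq : deriv (deriv f) =ᶠ[nhds z] _ :=
        Filter.eventuallyEq_of_mem (hUopen.mem_nhds hz) e2
      rw [heq.deriv_eq]
      exact (hF3 z hz).deriv
    refine ⟨by rw [hfz 0]; ring, ?_, ?_, ?_⟩
    · rw [e1 h0U]
      simp [Complex.one_cpow]
    · intro z hzb hz0
      have hzU : z ∈ U := hballU hzb
      have hbz : (1 - c*z) ≠ 0 := by
        intro h
        have : (0:ℝ) < (0:ℂ).re := h ▸ hzU
        simp at this
      have h1z : (1:ℂ) + z ≠ 0 := by
        intro h
        have : z = -1 := by linear_combination h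
        rw [this] at hzb
        simp at hzb
      have hsplit : (1 - c*z)^B = (1 - c*z)^(B-1) * (1 - c*z) := by
        conv_lhs => rw [show B = (B-1)+1 by ring]
        rw [Complex.cpow_add _ _ hbz, Complex.cpow_one]
      have hpow : (1 - c*z)^(B-1) ≠ 0 := by
        rw [Ne, Complex.cpow_eq_zero_iff]
        tauto
      have hderiv : deriv f z = (1 - c*z)^(B-1) * (1 + z) := by
        rw [e1 hzU]
        simp only [one_mul]
        rw [hsplit]
        linear_combination (-z) * (1 - c*z)^(B-1) * hBc
      have hratio : f z / (z * deriv f z) = (1 - c*z) / (1 + z) := by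
        rw [hfz z, hderiv, hsplit]
        have hD : z * ((1 - c*z)^(B-1) * (1 + z)) ≠ 0 :=
          mul_ne_zero hz0 (mul_ne_zero hpow h1z)
        rw [div_eq_div_iff hD h1z]
        ring
      rw [hratio]
      rw [Complex.div_re]
      have hx : z.re ^ 2 + z.im ^ 2 < 1 := by
        have hb := mem_ball_zero_iff.mp hzb
        have h2 := Complex.sq_norm z
        rw [Complex.normSq_apply] at h2
        nlinarith [norm_nonneg z]
      have hnsq : 0 < Complex.normSq (1 + z) := by
        rw [Complex.normSq_pos]
        exact h1z
      rw [← add_div, le_div_iff₀ hnsq]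
      simp only [Complex.normSq_apply, Complex.add_re, Complex.add_im, Complex.one_re,
        Complex.one_im, Complex.sub_re, Complex.sub_im, Complex.mul_re, Complex.mul_im,
        hcre, hcim]
      nlinarith [sq_nonneg z.re, sq_nonneg z.im]
    · have hi : iteratedDeriv 4 f = deriv (deriv (deriv (deriv f))) := by
        simp [iteratedDeriv_succ, iteratedDeriv_zero]
      have heq : deriv (deriv (deriv f)) =ᶠ[nhds (0:ℂ)] _ :=
        Filter.eventuallyEq_of_mem (hUopen.mem_nhds h0U) e3
      rw [hi, heq.deriv_eq, hF4.deriv]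
      have hB' : B = -(2*(1 - (α:ℂ)))/(1 - 2*(α:ℂ)) := by rw [hB]; ring
      have hcne' : (1:ℂ) - 2*(α:ℂ) ≠ 0 := by rw [← hc]; exact hcne
      rw [hB', hc]
      norm_num [Nat.factorial]
      field_simp
      ring
end
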